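/- arXiv:1304.1221 — 6 statements merged into one kernel-verified Lean document; each statement's English description precedes it below -/
import Mathlib

section
/- Let A_s be the s×s real tridiagonal matrix with diagonal entries all equal to b except the (1,1) entry which is b-α, with all superdiagonal entries equal to c and all subdiagonal entries equal to a. If |α| = √(ac) ≠ 0, then the spectrum of A_s is { b + 2α·cos(2jπ/(2s+1)) : j = 1, …, s }. -/
/-- The `s×s` tridiagonal matrix with diagonal entries `b` except the `(1,1)` entry which is
`b - α`, superdiagonal entries `c` and subdiagonal entries `a`. -/
def tridiagA (s : ℕ) (a b c α : ℝ) : Matrix (Fin s) (Fin s) ℝ :=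
  Matrix.of fun i j =>
    if i = j then (if (i : ℕ) = 0 then b - α else b)
    else if (i : ℕ) + 1 = (j : ℕ) then c
    else if (j : ℕ) + 1 = (i : ℕ) then a
    else 0

open Polynomial Matrix

lemma sin_add_sin_sub (x y : ℝ) :
    Real.sin (x + y) + Real.sin (x - y) = 2 * Real.sin x * Real.cos y := by
  rw [Real.sin_add, Real.sin_sub]; ring

lemma eval_charpoly' {n : ℕ} (M : Matrix (Fin n) (Fin n) ℝ) (x : ℝ) :
    M.charpoly.eval x = ((Matrix.diagonal fun _ => x) - M).det := by
  rw [Matrix.charpoly, ← Polynomial.coe_evalRingHom, RingHom.map_det]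
  congr 1
  ext i j
  by_cases h : i = j
  · subst h; simp [Matrix.charmatrix_apply_eq]
  · simp [Matrix.charmatrix_apply_ne _ _ _ h, Matrix.diagonal_apply_ne _ h]

def triG (lam b a c α : ℝ) (i k : ℕ) : ℝ :=
  if i = k then lam - (if i = 0 then b - α else b)
  else if i + 1 = k then -c
  else if k + 1 = i then -a
  else 0

lemma entry_eq (s : ℕ) (lam a b c α : ℝ) (i k : Fin s) :
    (((Matrix.diagonal fun _ => lam) - tridiagA s a b c α : Matrix (Fin s) (Fin s) ℝ)) i k
      = triG lam b a c α (i : ℕ) (k : ℕ) := by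
  by_cases h : i = k
  · subst h
    simp [tridiagA, triG, Matrix.diagonal_apply_eq]
  · have h' : (i : ℕ) ≠ (k : ℕ) := fun hh => h (Fin.ext hh)
    simp only [Matrix.sub_apply, Matrix.diagonal_apply_ne _ h, tridiagA, Matrix.of_apply,
      if_neg h, triG, if_neg h', zero_sub]
    split_ifs <;> ring

lemma interior_id (c α β a C : ℝ) (hcβ : c * β = α) (haβ : a = α * β) (m : ℕ)
    (S1 S3 S5 : ℝ) (hS : S5 + S1 = 2 * S3 * C) :
    2*α*C*(β^(m+1)*S3) - c*(β^(m+2)*S5) - a*(β^m*S1) = 0 := by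
  linear_combination (β^(m+1)*S1 - 2*C*S3*β^(m+1)) * hcβ + (-(β^m*S1)) * haβ
    + (-(c*β^(m+2))) * hS

lemma boundary_id (c α β C S1 S3 : ℝ) (hcβ : c * β = α) (hS : S3 - S1 = 2*S1*C) :
    (2*α*C + α)*S1 - c*(β*S3) = 0 := by
  linear_combination (-((2*C+1)*S1)) * hcβ + (-(c*β)) * hS

lemma isRoot_tridiag (s : ℕ) (a b c α : ℝ) (ha : 0 < a) (hc : 0 < c)
    (hac : a * c = α ^ 2) (hα : α ≠ 0) (j : ℕ) (hj1 : 1 ≤ j) (hjs : j ≤ s) :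
    (tridiagA s a b c α).charpoly.IsRoot
      (b + 2 * α * Real.cos (2 * (j:ℝ) * Real.pi / (2 * (s:ℝ) + 1))) := by
  have hs : 0 < s := lt_of_lt_of_le hj1 hjs
  have hc' : c ≠ 0 := ne_of_gt hc
  have h2s : (2 * (s:ℝ) + 1) ≠ 0 := by positivity
  set φ : ℝ := (j:ℝ) * Real.pi / (2 * (s:ℝ) + 1) with hφdef
  have hθ : 2 * (j:ℝ) * Real.pi / (2 * (s:ℝ) + 1) = 2 * φ := by rw [hφdef]; ring
  rw [hθ]
  set lam : ℝ := b + 2 * α * Real.cos (2 * φ) with hlam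
  set β : ℝ := α / c with hβ
  have hcβ : c * β = α := by rw [hβ]; field_simp
  have haβ : a = α * β := by
    rw [hβ]; field_simp; linear_combination hac
  set w : ℕ → ℝ := fun k => β^k * Real.sin ((2*(k:ℝ)+1)*φ) with hw
  have hws : w s = 0 := by
    have e : (2*(s:ℝ)+1)*φ = (j:ℝ) * Real.pi := by
      rw [hφdef]; field_simp
    rw [hw]; simp only
    rw [e, Real.sin_nat_mul_pi, mul_zero]
  have hφpos : 0 < φ := by
    apply div_pos
    · have : (1:ℝ) ≤ (j:ℝ) := by exact_mod_cast hj1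
      positivity
    · positivity
  have hφlt : φ < Real.pi := by
    rw [hφdef, div_lt_iff₀ (by positivity)]
    have : (j:ℝ) ≤ (s:ℝ) := by exact_mod_cast hjs
    nlinarith [Real.pi_pos]
  have hsinφ : Real.sin φ ≠ 0 := ne_of_gt (Real.sin_pos_of_pos_of_lt_pi hφpos hφlt)
  have hw0 : w 0 = Real.sin φ := by norm_num [hw]
  have hw1 : w 1 = β * Real.sin (3*φ) := by norm_num [hw]
  rw [Polynomial.IsRoot.def, eval_charpoly', ← Matrix.exists_mulVec_eq_zero_iff]
  refine ⟨fun k => w (k:ℕ), ?_, ?_⟩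
  · intro h0
    apply hsinφ
    have := congrFun h0 ⟨0, hs⟩
    simpa [hw0] using this
  · funext i
    simp only [Matrix.mulVec, dotProduct, Pi.zero_apply]
    have hre : ∀ k : Fin s,
        (((Matrix.diagonal fun _ => lam) - tridiagA s a b c α : Matrix (Fin s) (Fin s) ℝ)) i k
            * w (k:ℕ)
          = (fun k' : ℕ => triG lam b a c α (i:ℕ) k' * w k') (k:ℕ) := by
      intro k; simp only [entry_eq]
    rw [Finset.sum_congr rfl fun k _ => hre k,
      Fin.sum_univ_eq_sum_range (fun k' => triG lam b a c α (i:ℕ) k' * w k') s]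
    -- now prove the natural-number-indexed sum is zero for n = (i:ℕ) < s
    suffices H : ∀ n, n < s → ∑ k ∈ Finset.range s, triG lam b a c α n k * w k = 0 by
      exact H (i:ℕ) i.isLt
    intro n hn
    match n with
    | 0 =>
      have hsplit : ∀ k, triG lam b a c α 0 k * w k
          = (if k = 0 then (lam - (b - α)) * w 0 else 0)
            + (if k = 1 then (-c) * w 1 else 0) := by
        intro k
        match k with
        | 0 => simp [triG]
        | 1 => simp [triG]
        | (k+2) => simp [triG]
      rw [Finset.sum_congr rfl fun k _ => hsplit k, Finset.sum_add_distrib,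
        Finset.sum_ite_eq' (Finset.range s) 0, Finset.sum_ite_eq' (Finset.range s) 1]
      have h0mem : (0:ℕ) ∈ Finset.range s := Finset.mem_range.mpr hs
      have key : (lam - (b - α)) * w 0 + (-c) * w 1 = 0 := by
        have hS : Real.sin (3*φ) - Real.sin φ = 2 * Real.sin φ * Real.cos (2*φ) := by
          have key := sin_add_sin_sub φ (2*φ)
          rw [show φ + 2*φ = 3*φ by ring, show φ - 2*φ = -φ by ring, Real.sin_neg] at key
          linarith
        have hb := boundary_id c α β (Real.cos (2*φ)) (Real.sin φ) (Real.sin (3*φ)) hcβ hS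
        rw [hw0, hw1, hlam]
        ring_nf
        ring_nf at hb
        linarith
      by_cases h1s : 1 < s
      · rw [if_pos h0mem, if_pos (Finset.mem_range.mpr h1s)]
        exact key
      · have hs1 : s = 1 := by omega
        subst hs1
        rw [if_pos h0mem, if_neg (by simp)]
        have hw1' : w 1 = 0 := hws
        rw [hw1', mul_zero, add_zero] at key
        linarith [key]
    | (m+1) =>
      have hsplit : ∀ k, triG lam b a c α (m+1) k * w k
          = (if k = m+1 then (lam - b) * w (m+1) else 0)
            + (if k = m+2 then (-c) * w (m+2) else 0)
            + (if k = m then (-a) * w m else 0) := by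
        intro k
        by_cases h1 : k = m + 1
        · subst h1
          simp [triG, show ¬(m+1=0) by omega, show ¬(m+1 = m+2) by omega,
            show ¬(m+1 = m) by omega]
        · by_cases h2 : k = m + 2
          · subst h2
            simp [triG, show ¬(m+1 = m+2) by omega, show ¬(m+2 = m+1) by omega,
              show ¬(m+2 = m) by omega, show ¬(m+2+1 = m+1) by omega]
          · by_cases h3 : k = m
            · rw [h3]
              simp [triG, show ¬(m+1 = m) by omega, show ¬(m+1+1 = m) by omega,
                show ¬(m = m+1) by omega, show ¬(m = m+2) by omega]
            · simp [triG, h1, h2, h3, show ¬(m+1 = k) by omega, show ¬(m+2 = k) by omega,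
                show ¬(k+1 = m+1) by omega]
      rw [Finset.sum_congr rfl fun k _ => hsplit k, Finset.sum_add_distrib,
        Finset.sum_add_distrib, Finset.sum_ite_eq' (Finset.range s) (m+1),
        Finset.sum_ite_eq' (Finset.range s) (m+2), Finset.sum_ite_eq' (Finset.range s) m]
      rw [if_pos (Finset.mem_range.mpr hn), if_pos (Finset.mem_range.mpr (by omega : m < s))]
      have key : (lam - b) * w (m+1) + (-c) * w (m+2) + (-a) * w m = 0 := by
        have hS : Real.sin ((2*((m:ℝ)+2)+1)*φ) + Real.sin ((2*(m:ℝ)+1)*φ)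
            = 2 * Real.sin ((2*((m:ℝ)+1)+1)*φ) * Real.cos (2*φ) := by
          have key := sin_add_sin_sub ((2*((m:ℝ)+1)+1)*φ) (2*φ)
          rw [show (2*((m:ℝ)+1)+1)*φ + 2*φ = (2*((m:ℝ)+2)+1)*φ by ring,
            show (2*((m:ℝ)+1)+1)*φ - 2*φ = (2*(m:ℝ)+1)*φ by ring] at key
          exact key
        have hi := interior_id c α β a (Real.cos (2*φ)) hcβ haβ m
          (Real.sin ((2*(m:ℝ)+1)*φ)) (Real.sin ((2*((m:ℝ)+1)+1)*φ))
          (Real.sin ((2*((m:ℝ)+2)+1)*φ)) hS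
        have ew1 : w (m+1) = β^(m+1) * Real.sin ((2*((m:ℝ)+1)+1)*φ) := by
          rw [hw]; push_cast; ring_nf
        have ew2 : w (m+2) = β^(m+2) * Real.sin ((2*((m:ℝ)+2)+1)*φ) := by
          rw [hw]; push_cast; ring_nf
        rw [ew1, ew2, hw, hlam]
        ring_nf
        ring_nf at hi
        linarith
      by_cases hm2 : m+2 < s
      · rw [if_pos (Finset.mem_range.mpr hm2)]
        exact key
      · have : m + 2 = s := by omega
        rw [if_neg (by simp [Finset.mem_range]; omega)]
        have hwm2 : w (m+2) = 0 := by rw [this]; exact hws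
        rw [hwm2, mul_zero, add_zero] at key
        linarith [key]

/-- If `|α| = √(ac) ≠ 0` (with `a, c > 0`, `ac = α²`), then the spectrum of `A_s` is
`{ b + 2α cos(2jπ/(2s+1)) : j = 1,…,s }`. -/
theorem spectrum_tridiagA (s : ℕ) (hs : 0 < s) (a b c α : ℝ) (ha : 0 < a) (hc : 0 < c)
    (hac : a * c = α ^ 2) (hα : α ≠ 0) :
    (tridiagA s a b c α).charpoly.roots =
      (Finset.Icc 1 s).val.map
        (fun j : ℕ => b + 2 * α * Real.cos (2 * (j : ℝ) * Real.pi / (2 * (s : ℝ) + 1))) := by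
  set f : ℕ → ℝ :=
    fun j : ℕ => b + 2 * α * Real.cos (2 * (j : ℝ) * Real.pi / (2 * (s : ℝ) + 1)) with hf
  set p := (tridiagA s a b c α).charpoly with hp
  have hp0 : p ≠ 0 := (Matrix.charpoly_monic _).ne_zero
  -- injectivity on Icc 1 s
  have hinj : ∀ j1 ∈ Finset.Icc 1 s, ∀ j2 ∈ Finset.Icc 1 s, f j1 = f j2 → j1 = j2 := by
    intro j1 hj1 j2 hj2 hfe
    rw [Finset.mem_Icc] at hj1 hj2
    have hd : (0:ℝ) < 2 * (s:ℝ) + 1 := by positivity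
    have hmem : ∀ j : ℕ, 1 ≤ j → j ≤ s →
        2 * (j:ℝ) * Real.pi / (2 * (s:ℝ) + 1) ∈ Set.Icc 0 Real.pi := by
      intro j h1 h2
      constructor
      · positivity
      · rw [div_le_iff₀ hd]
        have : (j:ℝ) ≤ (s:ℝ) := by exact_mod_cast h2
        nlinarith [Real.pi_pos]
    have h2α : (2 * α) ≠ 0 := mul_ne_zero two_ne_zero hα
    have hcos : Real.cos (2 * (j1:ℝ) * Real.pi / (2 * (s:ℝ) + 1))
        = Real.cos (2 * (j2:ℝ) * Real.pi / (2 * (s:ℝ) + 1)) := by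
      have h := hfe
      rw [hf] at h
      simp only at h
      exact mul_left_cancel₀ h2α (by linarith)
    have heq := Real.injOn_cos (hmem j1 hj1.1 hj1.2) (hmem j2 hj2.1 hj2.2) hcos
    field_simp at heq
    exact_mod_cast heq
  have hnodup : (((Finset.Icc 1 s).val.map f)).Nodup :=
    Multiset.Nodup.map_on (fun x hx y hy => hinj x hx y hy) (Finset.Icc 1 s).nodup
  have hroot : ∀ x ∈ (Finset.Icc 1 s).val.map f, x ∈ p.roots := by
    intro x hx
    obtain ⟨j, hj, rfl⟩ := Multiset.mem_map.mp hx
    have hj' : j ∈ Finset.Icc 1 s := hj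
    rw [Finset.mem_Icc] at hj'
    have hj := hj'
    rw [Polynomial.mem_roots hp0]
    exact isRoot_tridiag s a b c α ha hc hac hα j hj.1 hj.2
  have hle : (Finset.Icc 1 s).val.map f ≤ p.roots := by
    rw [Multiset.le_iff_count]
    intro x
    by_cases hx : x ∈ (Finset.Icc 1 s).val.map f
    · calc Multiset.count x ((Finset.Icc 1 s).val.map f) ≤ 1 :=
            Multiset.nodup_iff_count_le_one.mp hnodup x
        _ ≤ Multiset.count x p.roots := Multiset.one_le_count_iff_mem.mpr (hroot x hx)
    · rw [Multiset.count_eq_zero_of_notMem hx]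
      exact Nat.zero_le _
  have hcard : Multiset.card p.roots ≤ Multiset.card ((Finset.Icc 1 s).val.map f) := by
    rw [Multiset.card_map]
    have h1 : Multiset.card p.roots ≤ p.natDegree := p.card_roots'
    have h2 : p.natDegree = s := by
      rw [hp, Matrix.charpoly_natDegree_eq_dim, Fintype.card_fin]
    have h3 : Multiset.card (Finset.Icc 1 s).val = s := by
      rw [← Finset.card_def, Nat.card_Icc]
      omega
    omega
  exact (Multiset.eq_of_le_of_card_le hle hcard).symm
end

section
/- Let H_k be the k×k tridiagonal matrix with diagonal (2, 2, …, 2, 3) (all 2's except the last entry, which is 3) and all sub- and super-diagonal entries equal to -1. Then the eigenvalues of H_k are 2 + 2cos(2jπ/(2k+1)) for j = 1, …, k. -/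
open scoped Classical

/-- `H_k = L(P_k) + e_k e_kᵀ`, the path Laplacian with one unit added to the last
diagonal entry. -/
noncomputable def HkMat (k : ℕ) : Matrix (Fin k) (Fin k) ℝ :=
  (SimpleGraph.pathGraph k).lapMatrix ℝ +
    Matrix.diagonal (fun i : Fin k => if (i : ℕ) = k - 1 then 1 else 0)

open Real Polynomial Matrix

private lemma sumIte (k : ℕ) (c : ℕ) (f : Fin k → ℝ) :
    (∑ u : Fin k, if (u : ℕ) = c then f u else 0) = if h : c < k then f ⟨c, h⟩ else 0 := by
  split_ifs with h
  · rw [Finset.sum_eq_single_of_mem (⟨c, h⟩ : Fin k) (Finset.mem_univ _)]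
    · simp
    · intro u _ hu
      exact if_neg fun hc => hu (Fin.ext hc)
  · exact Finset.sum_eq_zero fun u _ => if_neg fun hc => h (by rw [← hc]; exact u.isLt)

private lemma nbrSum (k : ℕ) (i : Fin k) (f : Fin k → ℝ) :
    ∑ u ∈ (SimpleGraph.pathGraph k).neighborFinset i, f u =
      (if h : (i : ℕ) + 1 < k then f ⟨(i : ℕ) + 1, h⟩ else 0) +
      (if 0 < (i : ℕ) then f ⟨(i : ℕ) - 1, lt_of_le_of_lt (Nat.sub_le _ _) i.isLt⟩
        else 0) := by
  classical
  rw [SimpleGraph.neighborFinset_eq_filter, Finset.sum_filter]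
  have key : ∀ u : Fin k, (if (SimpleGraph.pathGraph k).Adj i u then f u else 0)
      = (if (u : ℕ) = (i : ℕ) + 1 then f u else 0) +
        (if (u : ℕ) = (i : ℕ) - 1 ∧ 0 < (i : ℕ) then f u else 0) := by
    intro u
    rw [SimpleGraph.pathGraph_adj]
    by_cases h1 : (u : ℕ) = (i : ℕ) + 1
    · rw [if_pos (Or.inl h1.symm), if_pos h1, if_neg (by omega), add_zero]
    · by_cases h2 : (u : ℕ) + 1 = (i : ℕ)
      · rw [if_pos (Or.inr h2), if_neg h1, if_pos (by omega), zero_add]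
      · rw [if_neg (fun h => h.elim (fun a => h1 a.symm) h2), if_neg h1,
          if_neg (by omega), add_zero]
  rw [Finset.sum_congr rfl (fun u _ => key u), Finset.sum_add_distrib, sumIte]
  congr 1
  by_cases hi : 0 < (i : ℕ)
  · have hall : ∀ u : Fin k, (if (u : ℕ) = (i : ℕ) - 1 ∧ 0 < (i : ℕ) then f u else 0)
        = (if (u : ℕ) = (i : ℕ) - 1 then f u else 0) := fun u => by
      by_cases h : (u : ℕ) = (i : ℕ) - 1 <;> simp [h, hi]
    rw [Finset.sum_congr rfl fun u _ => hall u, sumIte,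
      dif_pos (lt_of_le_of_lt (Nat.sub_le _ _) i.isLt), if_pos hi]
  · simp [hi]

private lemma lap_mulVec (k : ℕ) (i : Fin k) (v : Fin k → ℝ) :
    ((SimpleGraph.pathGraph k).lapMatrix ℝ *ᵥ v) i =
      ∑ u ∈ (SimpleGraph.pathGraph k).neighborFinset i, (v i - v u) := by
  rw [SimpleGraph.lapMatrix_mulVec_apply, Finset.sum_sub_distrib, Finset.sum_const,
    nsmul_eq_mul]
  rw [SimpleGraph.card_neighborFinset_eq_degree]

private lemma charpoly_eval (n : ℕ) (M : Matrix (Fin n) (Fin n) ℝ) (x : ℝ) :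
    M.charpoly.eval x = (Matrix.diagonal (fun _ => x) - M).det := by
  have h := RingHom.map_det (Polynomial.evalRingHom x) (Matrix.charmatrix M)
  rw [Matrix.charpoly, ← Polynomial.coe_evalRingHom, h]
  congr 1
  ext i j
  by_cases hij : i = j
  · subst hij
    simp [Matrix.charmatrix_apply_eq, Matrix.map_apply]
  · simp [Matrix.charmatrix_apply_ne _ _ _ hij, Matrix.map_apply,
      Matrix.diagonal_apply_ne _ hij]

private lemma hk_eigen (k j : ℕ) (hk : 0 < k) (hj1 : 1 ≤ j) (hjk : j ≤ k) :
    ∃ v : Fin k → ℝ, v ≠ 0 ∧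
      HkMat k *ᵥ v = (2 + 2 * Real.cos (2 * (j : ℝ) * π / (2 * (k : ℝ) + 1))) • v := by
  have hN : (2 * (k : ℝ) + 1) ≠ 0 := by positivity
  set θ : ℝ := π - 2 * (j : ℝ) * π / (2 * (k : ℝ) + 1) with hθ
  set w : ℤ → ℝ := fun n => Real.cos (((n : ℝ) + 1 / 2) * θ) with hw
  have hrec : ∀ n : ℤ, w (n - 1) + w (n + 1) = 2 * Real.cos θ * w n := by
    intro n
    simp only [hw]
    push_cast
    rw [show ((n : ℝ) - 1 + 1 / 2) * θ = ((n : ℝ) + 1 / 2) * θ - θ by ring,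
      show ((n : ℝ) + 1 + 1 / 2) * θ = ((n : ℝ) + 1 / 2) * θ + θ by ring,
      Real.cos_sub, Real.cos_add]
    ring
  have hwneg : w (-1) = w 0 := by
    simp only [hw]
    push_cast
    rw [show ((-1 : ℝ) + 1 / 2) * θ = -(((0 : ℝ) + 1 / 2) * θ) by ring, Real.cos_neg]
  have hwk : w k = 0 := by
    simp only [hw]
    have hang : (((k : ℤ) : ℝ) + 1 / 2) * θ = ((k - j : ℕ) : ℝ) * π + π / 2 := by
      rw [hθ, Nat.cast_sub hjk]
      push_cast
      field_simp
      ring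
    rw [hang, Real.cos_add_pi_div_two, Real.sin_nat_mul_pi, neg_zero]
  have hcos : Real.cos θ = - Real.cos (2 * (j : ℝ) * π / (2 * (k : ℝ) + 1)) :=
    Real.cos_pi_sub _
  refine ⟨fun i => w (i : ℕ), ?_, ?_⟩
  · intro h0
    have h1 : w ((⟨0, hk⟩ : Fin k) : ℕ) = 0 := congrFun h0 ⟨0, hk⟩
    simp only [hw] at h1
    have hang : (((((0 : ℕ) : ℤ)) : ℝ) + 1 / 2) * θ = π / 2 - (j : ℝ) * π / (2 * (k : ℝ) + 1) := by
      rw [hθ]; push_cast; field_simp; ring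
    rw [hang, Real.cos_pi_div_two_sub] at h1
    have hjle : (j : ℝ) ≤ (k : ℝ) := by exact_mod_cast hjk
    have hj1' : (1 : ℝ) ≤ (j : ℝ) := by exact_mod_cast hj1
    have hpos : 0 < Real.sin ((j : ℝ) * π / (2 * (k : ℝ) + 1)) := by
      apply Real.sin_pos_of_pos_of_lt_pi
      · have := Real.pi_pos; positivity
      · rw [div_lt_iff₀ (by positivity)]
        nlinarith [Real.pi_pos]
    rw [h1] at hpos
    exact lt_irrefl _ hpos
  · funext i
    have hdiag : (Matrix.diagonal (fun i : Fin k => if (i : ℕ) = k - 1 then (1:ℝ) else 0) *ᵥ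
        (fun i => w (i : ℕ))) i = (if (i : ℕ) = k - 1 then (1:ℝ) else 0) * w (i : ℕ) :=
      Matrix.mulVec_diagonal _ _ _
    have hH : (HkMat k *ᵥ fun i => w (i : ℕ)) i =
        ((SimpleGraph.pathGraph k).lapMatrix ℝ *ᵥ fun i => w (i : ℕ)) i +
        (if (i : ℕ) = k - 1 then (1:ℝ) else 0) * w (i : ℕ) := by
      rw [HkMat, Matrix.add_mulVec, Pi.add_apply, hdiag]
    rw [hH, lap_mulVec, nbrSum]
    have hRHS : ((2 + 2 * Real.cos (2 * (j : ℝ) * π / (2 * (k : ℝ) + 1))) •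
        (fun i : Fin k => w (i : ℕ))) i = (2 - 2 * Real.cos θ) * w (i : ℕ) := by
      simp only [Pi.smul_apply, smul_eq_mul, hcos]
      ring
    rw [hRHS]
    have hilt := i.isLt
    by_cases h1 : (i : ℕ) + 1 < k
    · have hne : ¬ ((i : ℕ) = k - 1) := by omega
      rw [dif_pos h1, if_neg hne]
      by_cases h0 : 0 < (i : ℕ)
      · rw [if_pos h0]
        have e1 : ((((i : ℕ) + 1 : ℕ) : ℤ)) = ((i : ℕ) : ℤ) + 1 := by push_cast; ring
        have e2 : ((((i : ℕ) - 1 : ℕ) : ℤ)) = ((i : ℕ) : ℤ) - 1 := by omega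
        have := hrec ((i : ℕ) : ℤ)
        simp only [show ((⟨(i:ℕ)+1, h1⟩ : Fin k) : ℕ) = (i:ℕ)+1 from rfl,
          show ((⟨(i:ℕ)-1, lt_of_le_of_lt (Nat.sub_le _ _) i.isLt⟩ : Fin k) : ℕ) = (i:ℕ)-1 from rfl,
          e1, e2]
        linarith [this]
      · have hi0 : (i : ℕ) = 0 := by omega
        rw [if_neg h0]
        have e1 : ((((i : ℕ) + 1 : ℕ) : ℤ)) = ((i : ℕ) : ℤ) + 1 := by push_cast; ring
        have := hrec ((i : ℕ) : ℤ)
        have hwn : w (((i:ℕ) : ℤ) - 1) = w ((i:ℕ)) := by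
          rw [hi0]; exact hwneg
        simp only [show ((⟨(i:ℕ)+1, h1⟩ : Fin k) : ℕ) = (i:ℕ)+1 from rfl, e1]
        linarith [this, hwn]
    · have heq : (i : ℕ) = k - 1 := by omega
      rw [dif_neg h1, if_pos heq]
      have hik : ((i : ℕ) : ℤ) + 1 = (k : ℤ) := by omega
      have hwk' : w (((i:ℕ) : ℤ) + 1) = 0 := by rw [hik]; exact hwk
      have := hrec ((i : ℕ) : ℤ)
      by_cases h0 : 0 < (i : ℕ)
      · rw [if_pos h0]
        have e2 : ((((i : ℕ) - 1 : ℕ) : ℤ)) = ((i : ℕ) : ℤ) - 1 := by omega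
        simp only [show ((⟨(i:ℕ)-1, lt_of_le_of_lt (Nat.sub_le _ _) i.isLt⟩ : Fin k) : ℕ) = (i:ℕ)-1 from rfl, e2]
        linarith [this, hwk']
      · have hi0 : (i : ℕ) = 0 := by omega
        rw [if_neg h0]
        have hwn : w (((i:ℕ) : ℤ) - 1) = w ((i:ℕ)) := by rw [hi0]; exact hwneg
        linarith [this, hwk', hwn]

/-- The eigenvalues of `H_k` are `2 + 2cos(2jπ/(2k+1))` for `j = 1,…,k`. -/
theorem spectrum_Hk (k : ℕ) (hk : 0 < k) :
    (HkMat k).charpoly.roots =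
      (Finset.Icc 1 k).val.map
        (fun j : ℕ => 2 + 2 * Real.cos (2 * (j : ℝ) * Real.pi / (2 * (k : ℝ) + 1))) := by
  classical
  set f : ℕ → ℝ := fun j => 2 + 2 * Real.cos (2 * (j : ℝ) * π / (2 * (k : ℝ) + 1)) with hf
  set p := (HkMat k).charpoly with hp
  have hp0 : p ≠ 0 := (Matrix.charpoly_monic _).ne_zero
  have hdeg : p.natDegree = k := by
    rw [hp, Matrix.charpoly_natDegree_eq_dim, Fintype.card_fin]
  have hNpos : (0 : ℝ) < 2 * (k : ℝ) + 1 := by positivity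
  -- each f j is a root
  have hroot : ∀ j ∈ Finset.Icc 1 k, f j ∈ p.roots := by
    intro j hj
    rw [Finset.mem_Icc] at hj
    obtain ⟨v, hv0, hev⟩ := hk_eigen k j hk hj.1 hj.2
    rw [Polynomial.mem_roots hp0]
    show p.eval (f j) = 0
    rw [hp, charpoly_eval]
    rw [← Matrix.exists_mulVec_eq_zero_iff]
    refine ⟨v, hv0, ?_⟩
    rw [Matrix.sub_mulVec, hev]
    funext i
    simp [Matrix.mulVec_diagonal, hf]
  -- angles are in [0, π] and injective
  have hmem : ∀ j ∈ Finset.Icc 1 k, 2 * (j : ℝ) * π / (2 * (k : ℝ) + 1) ∈ Set.Icc 0 π := by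
    intro j hj
    rw [Finset.mem_Icc] at hj
    have hjle : (j : ℝ) ≤ (k : ℝ) := by exact_mod_cast hj.2
    have hj0 : (0 : ℝ) ≤ (j : ℝ) := Nat.cast_nonneg _
    constructor
    · positivity
    · rw [div_le_iff₀ hNpos]
      nlinarith [Real.pi_pos]
  have hinj : ∀ a ∈ (Finset.Icc 1 k).val, ∀ b ∈ (Finset.Icc 1 k).val, f a = f b → a = b := by
    intro a ha b hb hab
    have hcos : Real.cos (2 * (a : ℝ) * π / (2 * (k : ℝ) + 1)) =
        Real.cos (2 * (b : ℝ) * π / (2 * (k : ℝ) + 1)) := by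
      have : 2 * Real.cos (2 * (a : ℝ) * π / (2 * (k : ℝ) + 1)) =
          2 * Real.cos (2 * (b : ℝ) * π / (2 * (k : ℝ) + 1)) := by
        have := hab; simp only [hf] at this; linarith
      linarith
    have := Real.injOn_cos (hmem a ha) (hmem b hb) hcos
    have hpi := Real.pi_ne_zero
    field_simp at this
    have h : (a : ℝ) = b := by linarith
    exact_mod_cast h
  have hnodup : ((Finset.Icc 1 k).val.map f).Nodup :=
    Multiset.Nodup.map_on hinj (Finset.Icc 1 k).nodup
  have hsub : (Finset.Icc 1 k).val.map f ⊆ p.roots := by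
    intro x hx
    rw [Multiset.mem_map] at hx
    obtain ⟨j, hj, rfl⟩ := hx
    exact hroot j hj
  have hle : (Finset.Icc 1 k).val.map f ≤ p.roots :=
    (Multiset.le_iff_subset hnodup).2 hsub
  have hcard : Multiset.card p.roots ≤ Multiset.card ((Finset.Icc 1 k).val.map f) := by
    rw [Multiset.card_map]
    have hic : Multiset.card (Finset.Icc 1 k).val = k := by
      show (Finset.Icc 1 k).card = k
      simp [Nat.card_Icc]
    calc Multiset.card p.roots ≤ p.natDegree := p.card_roots'
      _ = k := hdeg
      _ = Multiset.card (Finset.Icc 1 k).val := hic.symm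
  exact (Multiset.eq_of_le_of_card_le hle hcard).symm
end

section
/- Let M_k be the k×k tridiagonal matrix with diagonal (4, 2, …, 2, 3) (first entry 4, last entry 3, all others 2) and all sub- and super-diagonal entries equal to -1. Then the eigenvalues of M_k are 2 - 2cos(2jπ/(2k+1)) for j = 1, …, k. -/
open scoped Classical

/-- `M_k = L(P_k) + e_k e_kᵀ + 2 e_1 e_1ᵀ`, the path Laplacian with one unit added to the last
diagonal entry and two units added to the first diagonal entry. -/
noncomputable def MkMat (k : ℕ) : Matrix (Fin k) (Fin k) ℝ :=
  (SimpleGraph.pathGraph k).lapMatrix ℝ +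
    Matrix.diagonal (fun i : Fin k => if (i : ℕ) = k - 1 then 1 else 0) +
    Matrix.diagonal (fun i : Fin k => if (i : ℕ) = 0 then 2 else 0)

open Polynomial in
lemma charpoly_eval' {n : Type*} [DecidableEq n] [Fintype n] {R : Type*} [CommRing R]
    (M : Matrix n n R) (r : R) :
    M.charpoly.eval r = (Matrix.scalar n r - M).det := by
  rw [Matrix.charpoly, _root_.eval_det, Matrix.matPolyEquiv_charmatrix]
  simp

open scoped Classical in
lemma path_sum {k : ℕ} (i : Fin k) (g : ℕ → ℝ) :
    ∑ u ∈ (SimpleGraph.pathGraph k).neighborFinset i, g u.1 =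
      (if i.1 + 1 < k then g (i.1+1) else 0) + (if 0 < i.1 then g (i.1-1) else 0) := by
  rw [SimpleGraph.neighborFinset_eq_filter, Finset.sum_filter]
  have key : ∀ u : Fin k, (if (SimpleGraph.pathGraph k).Adj i u then g u.1 else 0)
      = (if i.1+1 = u.1 then g u.1 else 0) + (if u.1+1 = i.1 then g u.1 else 0) := by
    intro u; rw [SimpleGraph.pathGraph_adj]
    by_cases h1 : i.1+1 = u.1 <;> by_cases h2 : u.1+1 = i.1 <;>
      simp [h1, h2] <;> omega
  simp_rw [key, Finset.sum_add_distrib]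
  congr 1
  · rw [Fin.sum_univ_eq_sum_range (fun n => if i.1+1 = n then g n else 0),
      Finset.sum_ite_eq]
    simp [Finset.mem_range]
  · rcases Nat.eq_zero_or_pos i.1 with hi | hi
    · simp [hi]
    · obtain ⟨m, hm⟩ : ∃ m, i.1 = m+1 := ⟨i.1-1, by omega⟩
      rw [Fin.sum_univ_eq_sum_range (fun n => if n+1 = i.1 then g n else 0)]
      have h2 : ∀ n ∈ Finset.range k, (if n+1 = i.1 then g n else 0) = (if n = m then g n else 0) := by
        intro n _; have : (n+1 = i.1) ↔ (n = m) := by omega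
        simp [this]
      rw [Finset.sum_congr rfl h2, Finset.sum_ite_eq']
      have hmem : m ∈ Finset.range k := by simp; omega
      simp [hmem, hi, hm]

set_option maxRecDepth 4000 in
open scoped Classical in
lemma path_deg {k : ℕ} (i : Fin k) :
    (((SimpleGraph.pathGraph k).degree i : ℕ) : ℝ) =
      (if i.1 + 1 < k then (1:ℝ) else 0) + (if 0 < i.1 then (1:ℝ) else 0) := by
  have h : (((SimpleGraph.pathGraph k).degree i : ℕ) : ℝ) =
      ∑ u ∈ (SimpleGraph.pathGraph k).neighborFinset i, (fun _ : ℕ => (1:ℝ)) u.1 := by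
    rw [Finset.sum_const, nsmul_eq_mul, mul_one, SimpleGraph.card_neighborFinset_eq_degree]
  rw [h]; exact path_sum i fun _ => 1


/-- The eigenvalues of `M_k` are `2 - 2cos(2jπ/(2k+1))` for `j = 1,…,k`. -/
theorem spectrum_Mk (k : ℕ) (hk : 0 < k) :
    (MkMat k).charpoly.roots =
      (Finset.Icc 1 k).val.map
        (fun j : ℕ => 2 - 2 * Real.cos (2 * (j : ℝ) * Real.pi / (2 * (k : ℝ) + 1))) := by
  have hkR : (0:ℝ) < 2*(k:ℝ)+1 := by positivity
  set lam : ℕ → ℝ := fun j => 2 - 2 * Real.cos (2 * (j:ℝ) * Real.pi / (2*(k:ℝ)+1)) with hlam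
  have hroot : ∀ j ∈ Finset.Icc 1 k, (MkMat k).charpoly.IsRoot (lam j) := by
    intro j hj
    rw [Finset.mem_Icc] at hj
    obtain ⟨hj1, hj2⟩ := hj
    set θ : ℝ := 2 * (j:ℝ) * Real.pi / (2*(k:ℝ)+1) with hθ
    have hsum : θ * (2*(k:ℝ)+1) = 2*(j:ℝ)*Real.pi := by
      rw [hθ]; field_simp
    set f : ℕ → ℝ := fun n => Real.sin (θ * ((k:ℝ) - n)) with hf
    have trig : ∀ A : ℝ, Real.sin (A+θ) + Real.sin (A-θ) = 2*Real.cos θ * Real.sin A := by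
      intro A; rw [Real.sin_add, Real.sin_sub]; ring
    have hrec : ∀ n : ℕ, f n + f (n+2) = 2 * Real.cos θ * f (n+1) := by
      intro n
      simp only [hf]
      push_cast
      rw [show θ*((k:ℝ) - (n:ℝ)) = θ*((k:ℝ)-((n:ℝ)+1)) + θ from by ring,
        show θ*((k:ℝ) - ((n:ℝ)+2)) = θ*((k:ℝ)-((n:ℝ)+1)) - θ from by ring, trig]
    have hfk : f k = 0 := by
      simp only [hf]; rw [sub_self, mul_zero, Real.sin_zero]
    have hper : Real.sin (θ*(k:ℝ) + θ) = - Real.sin (θ*(k:ℝ)) := by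
      have h1 : θ*(k:ℝ) + θ = -(θ*(k:ℝ)) + (j:ℝ)*(2*Real.pi) := by linear_combination hsum
      rw [h1, show ((j:ℝ)) * (2*Real.pi) = ((j:ℤ):ℝ) * (2*Real.pi) from by norm_num,
        Real.sin_add_int_mul_two_pi, Real.sin_neg]
    have hb : f 1 = (2*Real.cos θ + 1) * f 0 := by
      simp only [hf]
      push_cast
      rw [sub_zero]
      have := trig (θ*(k:ℝ))
      rw [hper] at this
      rw [show θ*((k:ℝ) - 1) = θ*(k:ℝ) - θ from by ring]
      linarith [this]
    have hf0 : f 0 ≠ 0 := by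
      simp only [hf]
      push_cast
      rw [sub_zero]
      intro h
      obtain ⟨n, hn⟩ := Real.sin_eq_zero_iff.1 h
      rw [hθ] at hn
      have hpi := Real.pi_ne_zero
      have hZ : (n:ℝ) * (2*(k:ℝ)+1) = 2*(j:ℝ)*(k:ℝ) := by
        field_simp at hn
        apply mul_right_cancel₀ hpi
        rw [hn]
      have hZ' : (n:ℤ) * (2*(k:ℤ)+1) = 2*(j:ℤ)*(k:ℤ) := by exact_mod_cast hZ
      have key : (j:ℤ) = ((j:ℤ) - n) * (2*(k:ℤ)+1) := by linear_combination hZ'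
      have hj1' : (1:ℤ) ≤ (j:ℤ) := by exact_mod_cast hj1
      have hj2' : (j:ℤ) ≤ (k:ℤ) := by exact_mod_cast hj2
      have hk' : (1:ℤ) ≤ (k:ℤ) := by exact_mod_cast hk
      rcases le_or_gt ((j:ℤ) - n) 0 with h' | h'
      · nlinarith
      · have : (1:ℤ) ≤ (j:ℤ) - n := h'
        nlinarith
    -- the eigenvector
    have hdet : (Matrix.scalar (Fin k) (lam j) - MkMat k).det = 0 := by
      rw [← Matrix.exists_mulVec_eq_zero_iff]
      refine ⟨fun i : Fin k => f i.1, ?_, ?_⟩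
      · intro h
        exact hf0 (congrFun h ⟨0, hk⟩)
      · ext i
        rw [Matrix.sub_mulVec, Pi.sub_apply]
        simp only [MkMat, Matrix.add_mulVec, Pi.add_apply,
          SimpleGraph.lapMatrix_mulVec_apply, Matrix.mulVec_diagonal]
        rw [path_sum i f, path_deg i]
        rw [Matrix.scalar_apply, Matrix.mulVec_diagonal]
        have hlamθ : lam j = 2 - 2*Real.cos θ := by rw [hlam, hθ]
        rw [hlamθ]
        rcases Nat.eq_zero_or_pos i.1 with hi | hi
        · rcases Nat.lt_or_ge (i.1+1) k with hlt | hge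
          · -- i = 0, k ≥ 2
            have h1 : ¬ (i.1 = k - 1) := by omega
            have h2 : ¬ (0 < i.1) := by omega
            simp only [if_pos hlt, if_neg h1, if_neg h2, if_pos hi, Pi.zero_apply]
            rw [hi]
            have e1 : f (0+1) = f 1 := rfl
            rw [e1]
            linear_combination hb
          · -- i = 0, k = 1
            have h1 : i.1 = k - 1 := by omega
            have h3 : ¬ (i.1+1 < k) := by omega
            have h2 : ¬ (0 < i.1) := by omega
            have hfke : f 1 = 0 := by rw [show (1:ℕ) = k from by omega]; exact hfk
            simp only [if_pos h1, if_neg h3, if_neg h2, if_pos hi, Pi.zero_apply]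
            rw [hi]
            linear_combination hb - hfke
        · obtain ⟨m, hm⟩ : ∃ m, i.1 = m+1 := ⟨i.1-1, by omega⟩
          have hik : i.1 < k := i.2
          rcases Nat.lt_or_ge (i.1+1) k with hlt | hge
          · -- middle vertex
            have h1 : ¬ (i.1 = k - 1) := by omega
            have h2 : ¬ (i.1 = 0) := by omega
            simp only [if_pos hlt, if_pos hi, if_neg h1, if_neg h2, Pi.zero_apply]
            rw [hm]
            have e1 : f (m+1+1) = f (m+2) := rfl
            have e2 : f (m+1-1) = f m := rfl
            rw [e1, e2]
            linear_combination hrec m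
          · -- last vertex
            have h1 : i.1 = k - 1 := by omega
            have h2 : ¬ (i.1 = 0) := by omega
            have h3 : ¬ (i.1 + 1 < k) := by omega
            have hfke : f (m+2) = 0 := by rw [show m+2 = k from by omega]; exact hfk
            simp only [if_pos h1, if_pos hi, if_neg h2, if_neg h3, Pi.zero_apply]
            rw [hm]
            have e2 : f (m+1-1) = f m := rfl
            rw [e2]
            linear_combination hrec m - hfke
    rw [Polynomial.IsRoot, charpoly_eval', hdet]
  -- injectivity
  have hinj : ∀ j1 ∈ Finset.Icc 1 k, ∀ j2 ∈ Finset.Icc 1 k, lam j1 = lam j2 → j1 = j2 := by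
    intro j1 h1 j2 h2 heq
    rw [Finset.mem_Icc] at h1 h2
    have hpi := Real.pi_pos
    have hmem : ∀ j : ℕ, j ∈ Finset.Icc 1 k → 2*(j:ℝ)*Real.pi/(2*(k:ℝ)+1) ∈ Set.Icc 0 Real.pi := by
      intro j hj
      rw [Finset.mem_Icc] at hj
      constructor
      · positivity
      · rw [div_le_iff₀ hkR]
        have : (j:ℝ) ≤ (k:ℝ) := by exact_mod_cast hj.2
        nlinarith
    have hcos : Real.cos (2*(j1:ℝ)*Real.pi/(2*(k:ℝ)+1)) = Real.cos (2*(j2:ℝ)*Real.pi/(2*(k:ℝ)+1)) := by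
      simp only [hlam] at heq
      linarith
    have := Real.injOn_cos (hmem j1 (Finset.mem_Icc.2 h1)) (hmem j2 (Finset.mem_Icc.2 h2)) hcos
    have h12 : (j1:ℝ) = (j2:ℝ) := by
      have hpi' := Real.pi_ne_zero
      field_simp at this
      exact_mod_cast this
    exact_mod_cast h12
  -- assemble
  set s : Multiset ℝ := (Finset.Icc 1 k).val.map lam with hs
  have hnodup : s.Nodup := Multiset.Nodup.map_on (fun a ha b hb h => hinj a ha b hb h) (Finset.Icc 1 k).nodup
  have hp0 : (MkMat k).charpoly ≠ 0 := ((MkMat k).charpoly_monic).ne_zero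
  have hle : s ≤ (MkMat k).charpoly.roots := by
    rw [Multiset.le_iff_count]
    intro a
    by_cases ha : a ∈ s
    · rw [Multiset.count_eq_one_of_mem hnodup ha, Polynomial.count_roots]
      obtain ⟨j, hj, rfl⟩ := Multiset.mem_map.1 ha
      exact (Polynomial.rootMultiplicity_pos hp0).2 (hroot j hj)
    · rw [Multiset.count_eq_zero_of_notMem ha]
      exact Nat.zero_le _
  have hcards : Multiset.card s = k := by
    rw [hs, Multiset.card_map]
    simp [Nat.card_Icc]
  have hcardr : Multiset.card (MkMat k).charpoly.roots ≤ k := by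
    have := Polynomial.card_roots' (MkMat k).charpoly
    rwa [Matrix.charpoly_natDegree_eq_dim, Fintype.card_fin] at this
  exact (Multiset.eq_of_le_of_card_le hle (by rw [hcards]; exact hcardr)).symm
end

section
/- Let L and L' be as in the preceding block form, with L' = L + E where E adds 2E_z to each diagonal H-block and -2E_z to the off-diagonal blocks (for z ∈ {0,1}^k). If v is an eigenvector of H + 2E_z with eigenvalue γ, then w = (vᵀ, -vᵀ, 0, 0ᵀ)ᵀ satisfies L'w = γw. Consequently, the multiset of eigenvalues of L' equals (spect(L) \ spect(H)) ∪ spect(H + 2E_z), counting multiplicities. -/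
/-- Column vector (as a `Fin k × Unit` matrix). -/
def colVec {k : ℕ} (y : Fin k → ℝ) : Matrix (Fin k) Unit ℝ :=
  Matrix.of fun i _ => y i

/-- The block matrix `[[H, 0, -y, 0], [0, H, -y, 0], [-yᵀ, -yᵀ, δ, tᵀ], [0, 0, t, B]]`. -/
def blockL (k m : ℕ) (H : Matrix (Fin k) (Fin k) ℝ) (y : Fin k → ℝ) (δ : ℝ)
    (t : Fin m → ℝ) (B : Matrix (Fin m) (Fin m) ℝ) :
    Matrix ((Fin k ⊕ Fin k) ⊕ (Unit ⊕ Fin m)) ((Fin k ⊕ Fin k) ⊕ (Unit ⊕ Fin m)) ℝ :=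
  Matrix.fromBlocks
    (Matrix.fromBlocks H 0 0 H)
    (Matrix.fromBlocks (-(colVec y)) 0 (-(colVec y)) 0)
    (Matrix.fromBlocks (Matrix.transpose (-(colVec y))) (Matrix.transpose (-(colVec y))) 0 0)
    (Matrix.fromBlocks (Matrix.of fun (_ : Unit) (_ : Unit) => δ)
      (Matrix.of fun (_ : Unit) j => t j)
      (Matrix.of fun i (_ : Unit) => t i) B)

/-- The perturbation `[[E_z, -E_z, 0, 0], [-E_z, E_z, 0, 0], [0,0,0,0], [0,0,0,0]]`,
where `E_z = Σ_{i : z_i = 1} e_i e_iᵀ = diagonal z`. -/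
def blockE (k m : ℕ) (z : Fin k → ℝ) :
    Matrix ((Fin k ⊕ Fin k) ⊕ (Unit ⊕ Fin m)) ((Fin k ⊕ Fin k) ⊕ (Unit ⊕ Fin m)) ℝ :=
  Matrix.fromBlocks
    (Matrix.fromBlocks (Matrix.diagonal z) (-(Matrix.diagonal z))
      (-(Matrix.diagonal z)) (Matrix.diagonal z)) 0 0 0



open Matrix Polynomial

variable {n' : Type*} [DecidableEq n'] [Fintype n']


lemma charpoly_conj (M T Tinv : Matrix n' n' ℝ) (h : Tinv * T = 1) :
    (Tinv * M * T).charpoly = M.charpoly := by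
  have hmap : (C : ℝ →+* ℝ[X]).mapMatrix Tinv * (C : ℝ →+* ℝ[X]).mapMatrix T = 1 := by
    rw [← _root_.map_mul, h, _root_.map_one]
  unfold Matrix.charpoly charmatrix
  have key : Matrix.scalar n' (X : ℝ[X]) - (C : ℝ →+* ℝ[X]).mapMatrix (Tinv * M * T)
      = (C : ℝ →+* ℝ[X]).mapMatrix Tinv *
        (Matrix.scalar n' (X : ℝ[X]) - (C : ℝ →+* ℝ[X]).mapMatrix M) *
        (C : ℝ →+* ℝ[X]).mapMatrix T := by
    rw [mul_sub, sub_mul, _root_.map_mul, _root_.map_mul]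
    congr 1
    rw [mul_assoc, scalar_commute (X : ℝ[X]) (Commute.all X) _, ← mul_assoc, hmap, one_mul]
  have hdet : ((C : ℝ →+* ℝ[X]).mapMatrix Tinv).det * ((C : ℝ →+* ℝ[X]).mapMatrix T).det = 1 := by
    rw [← det_mul, hmap, det_one]
  rw [key, det_mul, det_mul]
  calc ((C : ℝ →+* ℝ[X]).mapMatrix Tinv).det * (Matrix.scalar n' (X:ℝ[X]) - (C : ℝ →+* ℝ[X]).mapMatrix M).det * ((C : ℝ →+* ℝ[X]).mapMatrix T).det
      = (Matrix.scalar n' (X:ℝ[X]) - (C : ℝ →+* ℝ[X]).mapMatrix M).det * (((C : ℝ →+* ℝ[X]).mapMatrix Tinv).det * ((C : ℝ →+* ℝ[X]).mapMatrix T).det) := by ring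
    _ = _ := by rw [hdet, mul_one]



variable (k m : ℕ) (H : Matrix (Fin k) (Fin k) ℝ) (y : Fin k → ℝ) (δ : ℝ)
  (t : Fin m → ℝ) (B : Matrix (Fin m) (Fin m) ℝ) (z : Fin k → ℝ)

noncomputable abbrev Dblk : Matrix (Unit ⊕ Fin m) (Unit ⊕ Fin m) ℝ :=
  Matrix.fromBlocks (Matrix.of fun (_ : Unit) (_ : Unit) => δ)
      (Matrix.of fun (_ : Unit) j => t j)
      (Matrix.of fun i (_ : Unit) => t i) B

noncomputable abbrev Tmat : Matrix ((Fin k ⊕ Fin k) ⊕ (Unit ⊕ Fin m)) ((Fin k ⊕ Fin k) ⊕ (Unit ⊕ Fin m)) ℝ :=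
  Matrix.fromBlocks (Matrix.fromBlocks 1 1 1 (-1)) 0 0 1

noncomputable abbrev Tinv : Matrix ((Fin k ⊕ Fin k) ⊕ (Unit ⊕ Fin m)) ((Fin k ⊕ Fin k) ⊕ (Unit ⊕ Fin m)) ℝ :=
  Matrix.fromBlocks (Matrix.fromBlocks ((1/2:ℝ)•1) ((1/2:ℝ)•1) ((1/2:ℝ)•1) (-((1/2:ℝ)•1))) 0 0 1

theorem TinvT : Tinv k m * Tmat k m = 1 := by
  have h1 : ((1/2:ℝ)•(1:Matrix (Fin k) (Fin k) ℝ)) + (1/2:ℝ)•1 = 1 := by module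
  have h2 : ((1/2:ℝ)•(1:Matrix (Fin k) (Fin k) ℝ)) + -((1/2:ℝ)•1) = 0 := by module
  have h3 : ((1/2:ℝ)•(1:Matrix (Fin k) (Fin k) ℝ)) + - -((1/2:ℝ)•1) = 1 := by module
  simp only [Tinv, Tmat, fromBlocks_multiply, Matrix.mul_one, Matrix.one_mul,
    Matrix.zero_mul, Matrix.mul_zero, add_zero, zero_add, Matrix.mul_neg, Matrix.neg_mul]
  rw [h1, h2, h3, fromBlocks_one, fromBlocks_one]

theorem conj_eq : Tinv k m * (blockL k m H y δ t B + blockE k m z) * Tmat k m =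
    Matrix.fromBlocks
      (Matrix.fromBlocks H 0 0 (H + (2:ℝ)•Matrix.diagonal z))
      (Matrix.fromBlocks (-(colVec y)) 0 0 0)
      (Matrix.fromBlocks ((2:ℝ)•((-(colVec y))ᵀ)) 0 0 0)
      (Dblk m δ t B) := by
  simp only [Tinv, Tmat, blockL, blockE, Dblk, fromBlocks_add, fromBlocks_multiply,
    Matrix.mul_one, Matrix.one_mul, Matrix.zero_mul, Matrix.mul_zero, add_zero, zero_add,
    Matrix.mul_neg, Matrix.neg_mul, Matrix.smul_mul, Matrix.add_mul, Matrix.mul_add]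
  rw [fromBlocks_inj]
  refine ⟨?_, ?_, ?_, rfl⟩
  · rw [fromBlocks_inj]
    refine ⟨by module, by module, by module, by module⟩
  · rw [fromBlocks_inj]
    refine ⟨by module, rfl, by module, rfl⟩
  · rw [fromBlocks_inj]
    refine ⟨by module, by module, rfl, by module⟩

noncomputable abbrev L2 : Matrix (Fin k ⊕ (Unit ⊕ Fin m)) (Fin k ⊕ (Unit ⊕ Fin m)) ℝ :=
  Matrix.fromBlocks H
    (Matrix.of fun i j => Sum.elim (fun _ => -(y i)) (fun _ => (0:ℝ)) j)
    (Matrix.of fun p i => Sum.elim (fun _ => 2*(-(y i))) (fun _ => (0:ℝ)) p)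
    (Dblk m δ t B)

def eqv : ((Fin k ⊕ Fin k) ⊕ (Unit ⊕ Fin m)) ≃ (Fin k ⊕ (Fin k ⊕ (Unit ⊕ Fin m))) :=
  ((Equiv.sumComm (Fin k) (Fin k)).sumCongr (Equiv.refl _)).trans
    (Equiv.sumAssoc (Fin k) (Fin k) (Unit ⊕ Fin m))

theorem reindex_eq :
    Matrix.reindex (eqv k m) (eqv k m)
      (Matrix.fromBlocks
        (Matrix.fromBlocks H 0 0 (H + (2:ℝ)•Matrix.diagonal z))
        (Matrix.fromBlocks (-(colVec y)) 0 0 0)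
        (Matrix.fromBlocks ((2:ℝ)•((-(colVec y))ᵀ)) 0 0 0)
        (Dblk m δ t B)) =
    Matrix.fromBlocks (H + (2:ℝ)•Matrix.diagonal z) 0 0 (L2 k m H y δ t B) := by
  ext i j
  rcases i with i | (i | i | i) <;> rcases j with j | (j | j | j) <;>
    simp [eqv, colVec, Matrix.fromBlocks, mul_comm]

theorem key_charpoly :
    (blockL k m H y δ t B + blockE k m z).charpoly =
      (H + (2:ℝ)•Matrix.diagonal z).charpoly * (L2 k m H y δ t B).charpoly := by
  calc (blockL k m H y δ t B + blockE k m z).charpoly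
      = (Tinv k m * (blockL k m H y δ t B + blockE k m z) * Tmat k m).charpoly :=
        (charpoly_conj _ _ _ (TinvT k m)).symm
    _ = (Matrix.fromBlocks
          (Matrix.fromBlocks H 0 0 (H + (2:ℝ)•Matrix.diagonal z))
          (Matrix.fromBlocks (-(colVec y)) 0 0 0)
          (Matrix.fromBlocks ((2:ℝ)•((-(colVec y))ᵀ)) 0 0 0)
          (Dblk m δ t B)).charpoly := by rw [conj_eq]
    _ = (Matrix.reindex (eqv k m) (eqv k m) (Matrix.fromBlocks
          (Matrix.fromBlocks H 0 0 (H + (2:ℝ)•Matrix.diagonal z))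
          (Matrix.fromBlocks (-(colVec y)) 0 0 0)
          (Matrix.fromBlocks ((2:ℝ)•((-(colVec y))ᵀ)) 0 0 0)
          (Dblk m δ t B))).charpoly := (Matrix.charpoly_reindex _ _).symm
    _ = _ := by rw [reindex_eq, Matrix.charpoly_fromBlocks_zero₂₁]

theorem blockL_charpoly :
    (blockL k m H y δ t B).charpoly = H.charpoly * (L2 k m H y δ t B).charpoly := by
  have h0 : blockE k m (fun _ => (0:ℝ)) = 0 := by
    simp [blockE, Matrix.diagonal_zero]
  have := key_charpoly k m H y δ t B (fun _ => (0:ℝ))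
  simpa [h0, Matrix.diagonal_zero] using this


/-- If `v` is an eigenvector of `H + 2E_z` with eigenvalue `γ`, then
`w = (vᵀ, -vᵀ, 0, 0ᵀ)ᵀ` satisfies `L'w = γw`, where `L' = L + E`. Consequently, the
multiset of eigenvalues of `L'` equals `(spect(L) \ spect(H)) ∪ spect(H + 2E_z)`,
counting multiplicities. -/
theorem perturbed_spectrum (k m : ℕ) (hk : 0 < k) (H : Matrix (Fin k) (Fin k) ℝ)
    (y : Fin k → ℝ) (δ : ℝ) (t : Fin m → ℝ) (B : Matrix (Fin m) (Fin m) ℝ)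
    (hH : H.IsSymm) (hB : B.IsSymm)
    (z : Fin k → ℝ) (hz : ∀ i, z i = 0 ∨ z i = 1) :
    (∀ (v : Fin k → ℝ) (γ : ℝ), (H + (2 : ℝ) • Matrix.diagonal z).mulVec v = γ • v →
      (blockL k m H y δ t B + blockE k m z).mulVec
          (Sum.elim (Sum.elim v (fun i => -v i)) (fun _ => 0)) =
        γ • (Sum.elim (Sum.elim v (fun i => -v i)) (fun _ => 0))) ∧
    (blockL k m H y δ t B + blockE k m z).charpoly.roots =
      (blockL k m H y δ t B).charpoly.roots - H.charpoly.roots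
        + (H + (2 : ℝ) • Matrix.diagonal z).charpoly.roots := by
  constructor
  · intro v γ hv
    have hv' : H.mulVec v + (2:ℝ) • (Matrix.diagonal z).mulVec v = γ • v := by
      rw [← hv, Matrix.add_mulVec, Matrix.smul_mulVec]
    funext x
    rcases x with (i | i) | (u | j) <;>
      simp only [Matrix.add_mulVec, blockL, blockE, Matrix.fromBlocks_mulVec,
        Sum.elim_inl, Sum.elim_inr, Pi.add_apply, Pi.smul_apply, Sum.elim_inl,
        Matrix.mulVec_zero, add_zero, Pi.zero_apply, smul_eq_mul]
    · have hv2 := congrFun hv' i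
      simp only [Pi.add_apply, Pi.smul_apply, Matrix.mulVec_diagonal, smul_eq_mul] at hv2
      simp [Sum.elim_comp_inl, Sum.elim_comp_inr, Matrix.mulVec_diagonal,
        show (fun _ : Unit ⊕ Fin m => (0:ℝ)) = 0 from rfl]
      linarith
    · have hv2 := congrFun hv' i
      simp only [Pi.add_apply, Pi.smul_apply, Matrix.mulVec_diagonal, smul_eq_mul] at hv2
      have hneg : (H *ᵥ fun j => -v j) = -(H *ᵥ v) := by
        rw [show (fun j => -v j) = -v from rfl, Matrix.mulVec_neg]
      simp [Sum.elim_comp_inl, Sum.elim_comp_inr, Matrix.mulVec_diagonal, hneg,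
        show (fun _ : Unit ⊕ Fin m => (0:ℝ)) = 0 from rfl]
      linarith
    · simp [Sum.elim_comp_inl, Sum.elim_comp_inr, Matrix.mulVec, colVec,
        dotProduct, show (fun _ : Unit ⊕ Fin m => (0:ℝ)) = 0 from rfl]
    · simp [Sum.elim_comp_inl, Sum.elim_comp_inr,
        show (fun _ : Unit ⊕ Fin m => (0:ℝ)) = 0 from rfl,
        show (fun _ : Fin k => (0:ℝ)) = 0 from rfl]
  · have kc := key_charpoly k m H y δ t B z
    have lc := blockL_charpoly k m H y δ t B
    have h1 : (H + (2:ℝ)•Matrix.diagonal z).charpoly ≠ 0 :=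
      (Matrix.charpoly_monic _).ne_zero
    have h2 : (L2 k m H y δ t B).charpoly ≠ 0 := (Matrix.charpoly_monic _).ne_zero
    have h3 : H.charpoly ≠ 0 := (Matrix.charpoly_monic _).ne_zero
    rw [kc, lc, Polynomial.roots_mul (mul_ne_zero h1 h2),
      Polynomial.roots_mul (mul_ne_zero h3 h2), add_tsub_cancel_left, add_comm]
end

section
/- Let G be a graph in W_{n,k} (two disjoint copies of a k-vertex labeled graph G* plus an (n-2k)-vertex rooted graph Ğ, where the root u is joined to the copies of vertex i in both copies of G* whenever y_i = 1), and let H = L(G*) + E_y. Then every eigenvalue of H is a Laplacian eigenvalue of G; in particular G has at least k Laplacian eigenvalues (with multiplicity) in spect(H). -/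
open scoped Classical

/-- The base relation for a graph in `W_{n,k}`: two disjoint copies of the `k`-vertex
labeled graph `G*` together with the `(n-2k)`-vertex rooted graph `Ğ` (whose vertex set is
`Unit ⊕ Fin m` with root `Sum.inl ()`), where the root is joined to the copies of vertex `i`
in both copies of `G*` whenever `y i = 1`. -/
def wRel {k m : ℕ} (Gstar : SimpleGraph (Fin k)) (Gb : SimpleGraph (Unit ⊕ Fin m))
    (y : Fin k → Bool) :
    ((Fin k ⊕ Fin k) ⊕ (Unit ⊕ Fin m)) → ((Fin k ⊕ Fin k) ⊕ (Unit ⊕ Fin m)) → Prop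
  | Sum.inl (Sum.inl i), Sum.inl (Sum.inl j) => Gstar.Adj i j
  | Sum.inl (Sum.inr i), Sum.inl (Sum.inr j) => Gstar.Adj i j
  | Sum.inr a, Sum.inr b => Gb.Adj a b
  | Sum.inl (Sum.inl i), Sum.inr (Sum.inl _) => y i = true
  | Sum.inl (Sum.inr i), Sum.inr (Sum.inl _) => y i = true
  | _, _ => False

/-- The graph `G = G(G*, Ğ, y) ∈ W_{n,k}` (here `n = 2k + 1 + m`). -/
def wGraph {k m : ℕ} (Gstar : SimpleGraph (Fin k)) (Gb : SimpleGraph (Unit ⊕ Fin m))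
    (y : Fin k → Bool) : SimpleGraph ((Fin k ⊕ Fin k) ⊕ (Unit ⊕ Fin m)) :=
  SimpleGraph.fromRel (wRel Gstar Gb y)

open Matrix Polynomial

/-- Conjugation invariance of the characteristic polynomial. -/
lemma charpoly_conj_aux {n R : Type*} [Fintype n] [DecidableEq n] [CommRing R]
    (M Q Q' : Matrix n n R) (h : Q' * Q = 1) :
    (Q' * M * Q).charpoly = M.charpoly := by
  have hmap : (Q'.map C) * (Q.map C) = (1 : Matrix n n R[X]) := by
    rw [← Matrix.map_mul, h, Matrix.map_one _ (map_zero C) (map_one C)]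
  have hS : Matrix.scalar n (X : R[X]) = (X : R[X]) • (1 : Matrix n n R[X]) := by
    rw [Matrix.scalar_apply, Matrix.smul_one_eq_diagonal]
  have hcm : charmatrix (Q' * M * Q) = Q'.map C * charmatrix M * Q.map C := by
    simp only [charmatrix, RingHom.mapMatrix_apply, hS, mul_sub, sub_mul,
      Matrix.map_mul, mul_smul_comm, smul_mul_assoc, mul_one, one_mul, hmap]
  have h1 : det (Q'.map C) * det (Q.map C) = 1 := by rw [← det_mul, hmap, det_one]
  rw [Matrix.charpoly, Matrix.charpoly, hcm, det_mul, det_mul]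
  linear_combination M.charmatrix.det * h1

section aux
variable {k m : ℕ} (Gstar : SimpleGraph (Fin k)) (Gb : SimpleGraph (Unit ⊕ Fin m))
  (y : Fin k → Bool)

lemma wAdj_aa_aa (i j : Fin k) :
    (wGraph Gstar Gb y).Adj (Sum.inl (Sum.inl i)) (Sum.inl (Sum.inl j)) ↔ Gstar.Adj i j := by
  simp only [wGraph, SimpleGraph.fromRel_adj, wRel, ne_eq, Sum.inl.injEq]
  constructor
  · rintro ⟨hne, h | h⟩ <;> [exact h; exact h.symm]
  · intro h; exact ⟨h.ne, Or.inl h⟩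

lemma wAdj_ab_ab (i j : Fin k) :
    (wGraph Gstar Gb y).Adj (Sum.inl (Sum.inr i)) (Sum.inl (Sum.inr j)) ↔ Gstar.Adj i j := by
  simp only [wGraph, SimpleGraph.fromRel_adj, wRel, ne_eq, Sum.inl.injEq, Sum.inr.injEq]
  constructor
  · rintro ⟨hne, h | h⟩ <;> [exact h; exact h.symm]
  · intro h; exact ⟨h.ne, Or.inl h⟩

lemma wAdj_aa_ab (i j : Fin k) :
    ¬ (wGraph Gstar Gb y).Adj (Sum.inl (Sum.inl i)) (Sum.inl (Sum.inr j)) := by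
  simp [wGraph, SimpleGraph.fromRel_adj, wRel]

lemma wAdj_aa_u (i : Fin k) (u : Unit) :
    (wGraph Gstar Gb y).Adj (Sum.inl (Sum.inl i)) (Sum.inr (Sum.inl u)) ↔ y i := by
  simp [wGraph, SimpleGraph.fromRel_adj, wRel]

lemma wAdj_ab_u (i : Fin k) (u : Unit) :
    (wGraph Gstar Gb y).Adj (Sum.inl (Sum.inr i)) (Sum.inr (Sum.inl u)) ↔ y i := by
  simp [wGraph, SimpleGraph.fromRel_adj, wRel]

lemma wAdj_aa_r (i : Fin k) (r : Fin m) :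
    ¬ (wGraph Gstar Gb y).Adj (Sum.inl (Sum.inl i)) (Sum.inr (Sum.inr r)) := by
  simp [wGraph, SimpleGraph.fromRel_adj, wRel]

lemma wAdj_ab_r (i : Fin k) (r : Fin m) :
    ¬ (wGraph Gstar Gb y).Adj (Sum.inl (Sum.inr i)) (Sum.inr (Sum.inr r)) := by
  simp [wGraph, SimpleGraph.fromRel_adj, wRel]


lemma wAdj_ab_aa (i j : Fin k) :
    ¬ (wGraph Gstar Gb y).Adj (Sum.inl (Sum.inr i)) (Sum.inl (Sum.inl j)) := by
  simp [wGraph, SimpleGraph.fromRel_adj, wRel]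

lemma wAdj_u_aa (u : Unit) (i : Fin k) :
    (wGraph Gstar Gb y).Adj (Sum.inr (Sum.inl u)) (Sum.inl (Sum.inl i)) ↔ y i := by
  simp [wGraph, SimpleGraph.fromRel_adj, wRel]

lemma wAdj_u_ab (u : Unit) (i : Fin k) :
    (wGraph Gstar Gb y).Adj (Sum.inr (Sum.inl u)) (Sum.inl (Sum.inr i)) ↔ y i := by
  simp [wGraph, SimpleGraph.fromRel_adj, wRel]

lemma wAdj_r_aa (r : Fin m) (i : Fin k) :
    ¬ (wGraph Gstar Gb y).Adj (Sum.inr (Sum.inr r)) (Sum.inl (Sum.inl i)) := by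
  simp [wGraph, SimpleGraph.fromRel_adj, wRel]

lemma wAdj_r_ab (r : Fin m) (i : Fin k) :
    ¬ (wGraph Gstar Gb y).Adj (Sum.inr (Sum.inr r)) (Sum.inl (Sum.inr i)) := by
  simp [wGraph, SimpleGraph.fromRel_adj, wRel]

lemma wDeg_aa (i : Fin k) :
    (((wGraph Gstar Gb y).degree (Sum.inl (Sum.inl i)) : ℝ)) =
      (Gstar.degree i : ℝ) + (if y i then 1 else 0) := by
  rw [SimpleGraph.degree_eq_sum_if_adj, SimpleGraph.degree_eq_sum_if_adj]
  rw [Fintype.sum_sum_type, Fintype.sum_sum_type, Fintype.sum_sum_type]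
  simp [wAdj_aa_aa, wAdj_aa_ab, wAdj_aa_u, wAdj_aa_r]

lemma wDeg_ab (i : Fin k) :
    (((wGraph Gstar Gb y).degree (Sum.inl (Sum.inr i)) : ℝ)) =
      (Gstar.degree i : ℝ) + (if y i then 1 else 0) := by
  rw [SimpleGraph.degree_eq_sum_if_adj, SimpleGraph.degree_eq_sum_if_adj]
  rw [Fintype.sum_sum_type, Fintype.sum_sum_type, Fintype.sum_sum_type]
  have h := fun j => (wGraph Gstar Gb y).adj_comm (Sum.inl (Sum.inl j)) (Sum.inl (Sum.inr i))
  simp [wAdj_ab_ab, wAdj_ab_u, wAdj_ab_r, fun j => (wGraph Gstar Gb y).adj_comm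
    (Sum.inl (Sum.inr i)) (Sum.inl (Sum.inl j)), wAdj_aa_ab]

lemma lap_entry {V : Type*} [Fintype V] [DecidableEq V] (G : SimpleGraph V)
    [DecidableRel G.Adj] (a b : V) :
    G.lapMatrix ℝ a b = (if a = b then (G.degree a : ℝ) else 0) -
      (if G.Adj a b then 1 else 0) := by
  simp [SimpleGraph.lapMatrix, SimpleGraph.degMatrix, Matrix.diagonal_apply,
    Matrix.sub_apply]
end aux

/-- Every eigenvalue of `H = L(G*) + E_y` is a Laplacian eigenvalue of `G ∈ W_{n,k}`;
in particular `G` has at least `k` Laplacian eigenvalues (with multiplicity) in `spect(H)`. -/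
theorem wGraph_eigenvalues (k m : ℕ) (hk : 0 < k) (Gstar : SimpleGraph (Fin k))
    (Gb : SimpleGraph (Unit ⊕ Fin m)) (y : Fin k → Bool) :
    (Gstar.lapMatrix ℝ +
        Matrix.diagonal (fun i : Fin k => if y i then (1 : ℝ) else 0)).charpoly.roots ≤
      ((wGraph Gstar Gb y).lapMatrix ℝ).charpoly.roots := by
  set L := (wGraph Gstar Gb y).lapMatrix ℝ with hL
  set H := Gstar.lapMatrix ℝ + Matrix.diagonal (fun i : Fin k => if y i then (1 : ℝ) else 0)
    with hH
  set e := Equiv.sumAssoc (Fin k) (Fin k) (Unit ⊕ Fin m) with he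
  set M := Matrix.reindex e e L with hM
  set Rm : Matrix (Fin k ⊕ (Unit ⊕ Fin m)) (Fin k) ℝ :=
    Matrix.of (fun w i => Sum.elim (fun j => if j = i then (-1 : ℝ) else 0) (fun _ => 0) w)
    with hRm
  set Q : Matrix (Fin k ⊕ (Fin k ⊕ (Unit ⊕ Fin m)))
      (Fin k ⊕ (Fin k ⊕ (Unit ⊕ Fin m))) ℝ := Matrix.fromBlocks 1 0 Rm 1 with hQ
  set Q' : Matrix (Fin k ⊕ (Fin k ⊕ (Unit ⊕ Fin m)))
      (Fin k ⊕ (Fin k ⊕ (Unit ⊕ Fin m))) ℝ := Matrix.fromBlocks 1 0 (-Rm) 1 with hQ'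
  have hQQ : Q' * Q = 1 := by
    rw [hQ, hQ', Matrix.fromBlocks_multiply]
    simp only [Matrix.one_mul, Matrix.mul_one, Matrix.zero_mul, Matrix.mul_zero,
      add_zero, zero_add, neg_add_cancel]
    exact Matrix.fromBlocks_one
  set A := M.toBlocks₁₁ with hA
  set B := M.toBlocks₁₂ with hB
  set Cm := M.toBlocks₂₁ with hCm
  set D := M.toBlocks₂₂ with hD
  -- products with Rm
  have hmulR : ∀ {α : Type} (X : Matrix α (Fin k ⊕ (Unit ⊕ Fin m)) ℝ) (a : α) (j : Fin k),
      (X * Rm) a j = - X a (Sum.inl j) := by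
    intro α X a j
    rw [Matrix.mul_apply, Fintype.sum_sum_type]
    simp [hRm, mul_ite, Finset.sum_ite_eq']
  have hRmul : ∀ (X : Matrix (Fin k) (Fin k) ℝ) (w : Fin k ⊕ (Unit ⊕ Fin m)) (j : Fin k),
      (Rm * X) w j = - Sum.elim (fun l => X l j) (fun _ => 0) w := by
    intro X w j
    rw [Matrix.mul_apply]
    cases w with
    | inl l => simp [hRm, ite_mul, Finset.sum_ite_eq]
    | inr r => simp [hRm]
  -- entries of blocks
  have hAe : ∀ i j, A i j = L (Sum.inl (Sum.inl i)) (Sum.inl (Sum.inl j)) := by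
    intro i j; simp [hA, hM, Matrix.toBlocks₁₁, he, Equiv.sumAssoc_symm_apply_inl, Equiv.sumAssoc_symm_apply_inr_inl, Equiv.sumAssoc_symm_apply_inr_inr]
  have hBe : ∀ (i : Fin k) (w : Fin k ⊕ (Unit ⊕ Fin m)),
      B i w = L (Sum.inl (Sum.inl i)) (e.symm (Sum.inr w)) := by
    intro i w; simp [hB, hM, Matrix.toBlocks₁₂, he, Equiv.sumAssoc_symm_apply_inl, Equiv.sumAssoc_symm_apply_inr_inl, Equiv.sumAssoc_symm_apply_inr_inr]
  have hCe : ∀ (w : Fin k ⊕ (Unit ⊕ Fin m)) (j : Fin k),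
      Cm w j = L (e.symm (Sum.inr w)) (Sum.inl (Sum.inl j)) := by
    intro w j; simp [hCm, hM, Matrix.toBlocks₂₁, he, Equiv.sumAssoc_symm_apply_inl, Equiv.sumAssoc_symm_apply_inr_inl, Equiv.sumAssoc_symm_apply_inr_inr]
  have hDe : ∀ (w w' : Fin k ⊕ (Unit ⊕ Fin m)),
      D w w' = L (e.symm (Sum.inr w)) (e.symm (Sum.inr w')) := by
    intro w w'; simp [hD, hM, Matrix.toBlocks₂₂, he, Equiv.sumAssoc_symm_apply_inl, Equiv.sumAssoc_symm_apply_inr_inl, Equiv.sumAssoc_symm_apply_inr_inr]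
  -- the two key block identities
  have h11 : A + B * Rm = H := by
    ext i j
    rw [Matrix.add_apply, hmulR B i j, hAe, hBe]
    simp only [he, Equiv.sumAssoc_symm_apply_inl, Equiv.sumAssoc_symm_apply_inr_inl, Equiv.sumAssoc_symm_apply_inr_inr]
    rw [hL, lap_entry, lap_entry, hH]
    simp only [Matrix.add_apply, Matrix.diagonal_apply, lap_entry]
    rcases eq_or_ne i j with rfl | hij
    · simp [wAdj_aa_aa, wAdj_aa_ab, wDeg_aa, Gstar.irrefl]
    · simp [wAdj_aa_aa, wAdj_aa_ab, hij, Sum.inl.injEq]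
  have h21 : Cm + D * Rm = Rm * H := by
    ext w j
    rw [Matrix.add_apply, hmulR D w j, hRmul, hCe, hDe]
    cases w with
    | inl l =>
      simp only [he, Equiv.sumAssoc_symm_apply_inl, Equiv.sumAssoc_symm_apply_inr_inl, Equiv.sumAssoc_symm_apply_inr_inr, Sum.elim_inl]
      rw [hL, lap_entry, lap_entry, hH]
      simp only [Matrix.add_apply, Matrix.diagonal_apply, lap_entry]
      rcases eq_or_ne l j with rfl | hlj
      · simp [wAdj_ab_ab, wAdj_ab_aa, wDeg_ab, Gstar.irrefl]
      · simp [wAdj_ab_ab, wAdj_ab_aa, hlj, Sum.inr.injEq, Sum.inl.injEq]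
    | inr r =>
      simp only [he, Equiv.sumAssoc_symm_apply_inl, Equiv.sumAssoc_symm_apply_inr_inl, Equiv.sumAssoc_symm_apply_inr_inr, Sum.elim_inr, neg_zero]
      rw [hL, lap_entry, lap_entry]
      cases r with
      | inl u =>
        simp [wAdj_u_aa, wAdj_u_ab]
      | inr s =>
        simp [wAdj_r_aa, wAdj_r_ab]
  have key : Q' * M * Q = Matrix.fromBlocks H B 0 (-(Rm * B) + D) := by
    have hMb : M = Matrix.fromBlocks A B Cm D := (Matrix.fromBlocks_toBlocks M).symm
    rw [hMb, hQ, hQ', Matrix.fromBlocks_multiply, Matrix.fromBlocks_multiply]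
    simp only [Matrix.one_mul, Matrix.mul_one, Matrix.zero_mul, Matrix.mul_zero,
      add_zero, zero_add, Matrix.neg_mul]
    have h3 : -(Rm * A) + Cm + (-(Rm * B) + D) * Rm = 0 := by
      have : -(Rm * A) + Cm + (-(Rm * B) + D) * Rm
          = (Cm + D * Rm) - Rm * (A + B * Rm) := by
        rw [Matrix.add_mul, Matrix.mul_add, Matrix.neg_mul, Matrix.mul_assoc]
        abel
      rw [this, h21, h11, sub_self]
    rw [h3, h11]
  have hchar : L.charpoly = H.charpoly * (-(Rm * B) + D).charpoly := by
    rw [← Matrix.charpoly_reindex e L, ← hM, ← charpoly_conj_aux M Q Q' hQQ, key,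
      Matrix.charpoly_fromBlocks_zero₂₁]
  rw [hchar]
  rw [Polynomial.roots_mul (mul_ne_zero (Matrix.charpoly_monic H).ne_zero
    (Matrix.charpoly_monic _).ne_zero)]
  exact Multiset.le_add_right _ _
end

section
/- Let G ∈ W_{n,k} with building blocks G*, Ğ and adjacency vector y, and let H = L(G*) + E_y. For any z ∈ {0,1}^k, let E_z(G) be obtained from G by adding an edge between the two copies of vertex i of G* whenever z_i = 1. Then the Laplacian spectrum of E_z(G) equals (Lspect(G) \ spect(H)) ∪ spect(H + 2E_z) as multisets; in particular G and E_z(G) share at least n-k Laplacian eigenvalues. -/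
open scoped Classical

/-- The graph `𝓔_z(G)`, obtained from `G ∈ W_{n,k}` by adding an edge between the two copies
of vertex `i` of `G*` whenever `z i = 1`. -/
def ezGraph {k m : ℕ} (Gstar : SimpleGraph (Fin k)) (Gb : SimpleGraph (Unit ⊕ Fin m))
    (y z : Fin k → Bool) : SimpleGraph ((Fin k ⊕ Fin k) ⊕ (Unit ⊕ Fin m)) :=
  wGraph Gstar Gb y ⊔ SimpleGraph.fromEdgeSet
    {e | ∃ i : Fin k, z i = true ∧ e = s(Sum.inl (Sum.inl i), Sum.inl (Sum.inr i))}


open Matrix Polynomial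


open Polynomial Matrix

variable {n : Type*} [Fintype n] [DecidableEq n]

lemma my_charmatrix_conj (P M : Matrix n n ℝ) (h : Pᵀ * P = 1) :
    charmatrix (Pᵀ * M * P) = (P.map C)ᵀ * charmatrix M * (P.map C) := by
  have hmapone : ((1 : Matrix n n ℝ).map (C : ℝ →+* ℝ[X])) = 1 :=
    Matrix.map_one _ (map_zero C) (map_one C)
  have h1 : (P.map (C : ℝ →+* ℝ[X]))ᵀ * (P.map C) = 1 := by
    rw [← Matrix.transpose_map, ← Matrix.map_mul, h, hmapone]
  unfold charmatrix
  rw [mul_sub, sub_mul]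
  congr 1
  · rw [Matrix.scalar_apply, ← Matrix.smul_one_eq_diagonal, Matrix.mul_smul, Matrix.smul_mul,
      mul_one, h1]
  · simp only [RingHom.mapMatrix_apply]
    rw [← Matrix.transpose_map, ← Matrix.map_mul, ← Matrix.map_mul]

lemma my_charpoly_conj (P M : Matrix n n ℝ) (h : Pᵀ * P = 1) :
    (Pᵀ * M * P).charpoly = M.charpoly := by
  have hmapone : ((1 : Matrix n n ℝ).map (C : ℝ →+* ℝ[X])) = 1 :=
    Matrix.map_one _ (map_zero C) (map_one C)
  have h1 : (P.map (C : ℝ →+* ℝ[X]))ᵀ * (P.map C) = 1 := by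
    rw [← Matrix.transpose_map, ← Matrix.map_mul, h, hmapone]
  have h2 : (P.map (C : ℝ →+* ℝ[X]))ᵀ.det * (P.map C).det = 1 := by
    rw [← Matrix.det_mul, h1, Matrix.det_one]
  rw [Matrix.charpoly, Matrix.charpoly, my_charmatrix_conj P M h, Matrix.det_mul, Matrix.det_mul]
  linear_combination (charmatrix M).det * h2

lemma my_charpoly_diagonal (d : n → ℝ) :
    (Matrix.diagonal d).charpoly = ∏ i, (X - C (d i)) := by
  have : charmatrix (Matrix.diagonal d) = Matrix.diagonal (fun i => X - C (d i)) := by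
    ext i j
    by_cases hij : i = j
    · subst hij; simp
    · simp [hij, charmatrix_apply_ne _ _ _ hij, Matrix.diagonal_apply_ne _ hij]
  rw [Matrix.charpoly, this, Matrix.det_diagonal]

lemma my_card_roots_hermitian {M : Matrix n n ℝ} (hM : M.IsHermitian) :
    Multiset.card M.charpoly.roots = Fintype.card n := by
  classical
  set U : Matrix n n ℝ := (hM.eigenvectorUnitary : Matrix n n ℝ) with hU
  have horth : Uᵀ * U = 1 := by
    rw [← Matrix.conjTranspose_eq_transpose_of_trivial]
    exact Unitary.coe_star_mul_self hM.eigenvectorUnitary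
  have hsp : Uᵀ * M * U = Matrix.diagonal (RCLike.ofReal ∘ hM.eigenvalues) := by
    rw [← Matrix.conjTranspose_eq_transpose_of_trivial]
    have := hM.conjStarAlgAut_star_eigenvectorUnitary; rw [Unitary.conjStarAlgAut_star_apply] at this; exact this
  have hcp : M.charpoly = ∏ i, (X - C ((RCLike.ofReal ∘ hM.eigenvalues) i)) := by
    rw [← my_charpoly_conj U M horth, hsp, my_charpoly_diagonal]
  rw [hcp]
  have : (∏ i, (X - C ((RCLike.ofReal ∘ hM.eigenvalues) i)))
      = ((Finset.univ.val.map fun i => ((RCLike.ofReal ∘ hM.eigenvalues) i : ℝ)).map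
          fun a => X - C a).prod := by
    rw [Multiset.map_map]; rfl
  rw [this, Polynomial.roots_multiset_prod_X_sub_C, Multiset.card_map]
  exact Finset.card_univ

abbrev Vt (k m : ℕ) := (Fin k ⊕ Fin k) ⊕ (Unit ⊕ Fin m)

noncomputable def adjW {k m : ℕ} (Gstar : SimpleGraph (Fin k)) (Gb : SimpleGraph (Unit ⊕ Fin m))
    (y : Fin k → Bool) : Matrix (Vt k m) (Vt k m) ℝ := fun v w =>
  match v, w with
  | .inl (.inl i), .inl (.inl j) => if Gstar.Adj i j then 1 else 0
  | .inl (.inr i), .inl (.inr j) => if Gstar.Adj i j then 1 else 0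
  | .inl (.inl i), .inr (.inl _) => if y i then 1 else 0
  | .inr (.inl _), .inl (.inl i) => if y i then 1 else 0
  | .inl (.inr i), .inr (.inl _) => if y i then 1 else 0
  | .inr (.inl _), .inl (.inr i) => if y i then 1 else 0
  | .inr a, .inr b => if Gb.Adj a b then 1 else 0
  | _, _ => 0

noncomputable def adjZ {k m : ℕ} (z : Fin k → Bool) :
    Matrix (Vt k m) (Vt k m) ℝ := fun v w =>
  match v, w with
  | .inl (.inl i), .inl (.inr j) => if i = j ∧ z i then 1 else 0
  | .inl (.inr i), .inl (.inl j) => if i = j ∧ z i then 1 else 0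
  | _, _ => 0

lemma or_adj {V : Type*} (G : SimpleGraph V) (i j : V) :
    G.Adj i j ∨ G.Adj j i ↔ G.Adj i j := ⟨fun h => h.elim id fun h => h.symm, Or.inl⟩

lemma ne_and_adj {V : Type*} (G : SimpleGraph V) (i j : V) :
    (¬ i = j) ∧ G.Adj i j ↔ G.Adj i j :=
  ⟨And.right, fun h => ⟨fun e => G.irrefl (e ▸ h), h⟩⟩

lemma ne_and_adj_inr {V W : Type*} (G : SimpleGraph (V ⊕ W)) (b b' : W) :
    (¬ b = b') ∧ G.Adj (Sum.inr b) (Sum.inr b') ↔ G.Adj (Sum.inr b) (Sum.inr b') :=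
  ⟨And.right, fun h => ⟨fun e => G.irrefl (by subst e; exact h), h⟩⟩

variable {k m : ℕ} (Gstar : SimpleGraph (Fin k)) (Gb : SimpleGraph (Unit ⊕ Fin m))
  (y z : Fin k → Bool)

lemma adjMatrix_wGraph : (wGraph Gstar Gb y).adjMatrix ℝ = adjW Gstar Gb y := by
  ext v w
  rcases v with ((i|i)|(u|b)) <;> rcases w with ((j|j)|(u'|b')) <;> rw [SimpleGraph.adjMatrix_apply] <;>
    simp [adjW, wGraph, SimpleGraph.fromRel_adj, wRel, or_adj, ne_and_adj, ne_and_adj_inr]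

lemma adjMatrix_ezGraph :
    (ezGraph Gstar Gb y z).adjMatrix ℝ = adjW Gstar Gb y + adjZ z := by
  ext v w
  rcases v with ((i|i)|(u|b)) <;> rcases w with ((j|j)|(u'|b')) <;> rw [SimpleGraph.adjMatrix_apply] <;>
    simp [ezGraph, adjW, adjZ, wGraph, SimpleGraph.fromRel_adj, SimpleGraph.fromEdgeSet_adj,
      wRel, or_adj, ne_and_adj, ne_and_adj_inr, Sym2.eq_iff] <;>
    split_ifs <;> simp_all <;> aesop

lemma lap_apply {V : Type*} [Fintype V] [DecidableEq V] (G : SimpleGraph V)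
    [DecidableRel G.Adj] (v w : V) :
    G.lapMatrix ℝ v w =
      (if v = w then ∑ u, G.adjMatrix ℝ v u else 0) - G.adjMatrix ℝ v w := by
  rw [SimpleGraph.lapMatrix, Matrix.sub_apply, SimpleGraph.degMatrix, Matrix.diagonal_apply]
  congr 1
  split_ifs with h
  · rw [SimpleGraph.degree_eq_sum_if_adj]
    simp [SimpleGraph.adjMatrix_apply]
  · rfl

lemma sum_adjW_row1 (i : Fin k) :
    ∑ u : Vt k m, adjW Gstar Gb y (.inl (.inl i)) u =
      (Gstar.degree i : ℝ) + (if y i then 1 else 0) := by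
  rw [SimpleGraph.degree_eq_sum_if_adj]
  simp [Fintype.sum_sum_type, adjW]

lemma sum_adjW_row2 (i : Fin k) :
    ∑ u : Vt k m, adjW Gstar Gb y (.inl (.inr i)) u =
      (Gstar.degree i : ℝ) + (if y i then 1 else 0) := by
  rw [SimpleGraph.degree_eq_sum_if_adj]
  simp [Fintype.sum_sum_type, adjW]

lemma sum_adjZ_row1 (i : Fin k) :
    ∑ u : Vt k m, adjZ (m := m) z (.inl (.inl i)) u = (if z i then 1 else 0) := by
  by_cases hz : z i = true <;> simp [Fintype.sum_sum_type, adjZ, hz]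

lemma sum_adjZ_row2 (i : Fin k) :
    ∑ u : Vt k m, adjZ (m := m) z (.inl (.inr i)) u = (if z i then 1 else 0) := by
  by_cases hz : z i = true <;> simp [Fintype.sum_sum_type, adjZ, hz]

lemma sum_adjZ_rowr (a : Unit ⊕ Fin m) :
    ∑ u : Vt k m, adjZ (k := k) z (.inr a) u = 0 := by
  simp [Fintype.sum_sum_type, adjZ]

noncomputable def Dmat {k m : ℕ} (z : Fin k → Bool) : Matrix (Vt k m) (Vt k m) ℝ :=
  fun v w => (if v = w then ∑ u, adjZ (m := m) z v u else 0) - adjZ z v w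

lemma lap_ez_eq :
    (ezGraph Gstar Gb y z).lapMatrix ℝ = (wGraph Gstar Gb y).lapMatrix ℝ + Dmat z := by
  ext v w
  rw [Matrix.add_apply, lap_apply, lap_apply, Dmat, adjMatrix_ezGraph, adjMatrix_wGraph]
  simp only [Matrix.add_apply, Finset.sum_add_distrib]
  split_ifs <;> ring

abbrev Wt (k m : ℕ) := (Fin k ⊕ (Unit ⊕ Fin m)) ⊕ Fin k

noncomputable def cc : ℝ := (Real.sqrt 2)⁻¹

lemma cc_mul_cc : cc * cc = 1 / 2 := by
  rw [cc, ← mul_inv]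
  rw [Real.mul_self_sqrt (by norm_num : (2:ℝ) ≥ 0)]
  norm_num

noncomputable def Pm {k m : ℕ} : Matrix (Wt k m) (Wt k m) ℝ := fun v w =>
  match v, w with
  | .inl (.inl i), .inl (.inl j) => if i = j then cc else 0
  | .inr i, .inl (.inl j) => if i = j then cc else 0
  | .inl (.inl i), .inr j => if i = j then cc else 0
  | .inr i, .inr j => if i = j then -cc else 0
  | .inl (.inr a), .inl (.inr b) => if a = b then 1 else 0
  | _, _ => 0

section PmLemmas
variable {k m : ℕ}

lemma sumP_col1 (j : Fin k) (f : Wt k m → ℝ) :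
    ∑ v, f v * Pm v (.inl (.inl j)) = cc * (f (.inl (.inl j)) + f (.inr j)) := by
  simp [Pm, Fintype.sum_sum_type, mul_ite, Finset.sum_ite_eq, Finset.sum_ite_eq']
  ring

lemma sumP_col2 (b : Unit ⊕ Fin m) (f : Wt k m → ℝ) :
    ∑ v, f v * Pm v (.inl (.inr b)) = f (.inl (.inr b)) := by
  simp [Pm, Fintype.sum_sum_type, mul_ite, Finset.sum_ite_eq, Finset.sum_ite_eq']

lemma sumP_col3 (j : Fin k) (f : Wt k m → ℝ) :
    ∑ v, f v * Pm v (.inr j) = cc * (f (.inl (.inl j)) - f (.inr j)) := by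
  simp [Pm, Fintype.sum_sum_type, mul_ite, Finset.sum_ite_eq, Finset.sum_ite_eq']
  ring

lemma sumP_row1 (j : Fin k) (f : Wt k m → ℝ) :
    ∑ v, Pm v (.inl (.inl j)) * f v = cc * (f (.inl (.inl j)) + f (.inr j)) := by
  simp_rw [mul_comm]; exact sumP_col1 j f

lemma sumP_row2 (b : Unit ⊕ Fin m) (f : Wt k m → ℝ) :
    ∑ v, Pm v (.inl (.inr b)) * f v = f (.inl (.inr b)) := by
  simp_rw [mul_comm]; exact sumP_col2 b f

lemma sumP_row3 (j : Fin k) (f : Wt k m → ℝ) :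
    ∑ v, Pm v (.inr j) * f v = cc * (f (.inl (.inl j)) - f (.inr j)) := by
  simp_rw [mul_comm]; exact sumP_col3 j f

lemma mulPm_col1 (N : Matrix (Wt k m) (Wt k m) ℝ) (v : Wt k m) (j : Fin k) :
    ((N * Pm : Matrix (Wt k m) (Wt k m) ℝ)) v (.inl (.inl j)) = cc * (N v (.inl (.inl j)) + N v (.inr j)) := by
  rw [Matrix.mul_apply]; exact sumP_col1 j _

lemma mulPm_col2 (N : Matrix (Wt k m) (Wt k m) ℝ) (v : Wt k m) (b : Unit ⊕ Fin m) :
    ((N * Pm : Matrix (Wt k m) (Wt k m) ℝ)) v (.inl (.inr b)) = N v (.inl (.inr b)) := by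
  rw [Matrix.mul_apply]; exact sumP_col2 b _

lemma mulPm_col3 (N : Matrix (Wt k m) (Wt k m) ℝ) (v : Wt k m) (j : Fin k) :
    ((N * Pm : Matrix (Wt k m) (Wt k m) ℝ)) v (.inr j) = cc * (N v (.inl (.inl j)) - N v (.inr j)) := by
  rw [Matrix.mul_apply]; exact sumP_col3 j _

lemma triple_apply (N : Matrix (Wt k m) (Wt k m) ℝ) (w1 w2 : Wt k m) :
    ((Pmᵀ * N * Pm : Matrix (Wt k m) (Wt k m) ℝ)) w1 w2 = ∑ v, Pm v w1 * ((N * Pm : Matrix (Wt k m) (Wt k m) ℝ)) v w2 := by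
  rw [mul_assoc, Matrix.mul_apply]
  simp only [Matrix.transpose_apply]

lemma PtP : (Pm (k := k) (m := m))ᵀ * Pm = 1 := by
  have h2 := cc_mul_cc
  ext w1 w2
  rw [Matrix.mul_apply]
  simp only [Matrix.transpose_apply]
  rcases w1 with (j|b)|j
  · rw [sumP_row1 j (fun u => Pm u w2)]
    rcases w2 with (j'|b')|j' <;> simp [Pm, Matrix.one_apply] <;> split_ifs <;>
      simp_all <;> nlinarith
  · rw [sumP_row2 b (fun u => Pm u w2)]
    rcases w2 with (j'|b')|j' <;> simp [Pm, Matrix.one_apply]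
  · rw [sumP_row3 j (fun u => Pm u w2)]
    rcases w2 with (j'|b')|j' <;> simp [Pm, Matrix.one_apply] <;> split_ifs <;>
      simp_all <;> nlinarith

end PmLemmas

def we {k m : ℕ} : Wt k m ≃ Vt k m where
  toFun v := match v with
    | .inl (.inl i) => .inl (.inl i)
    | .inl (.inr a) => .inr a
    | .inr i => .inl (.inr i)
  invFun v := match v with
    | .inl (.inl i) => .inl (.inl i)
    | .inl (.inr i) => .inr i
    | .inr a => .inl (.inr a)
  left_inv v := by rcases v with ((i|a)|i) <;> rfl
  right_inv v := by rcases v with ((i|i)|a) <;> rfl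

@[simp] lemma we_a {k m : ℕ} (i : Fin k) :
    we (k := k) (m := m) (.inl (.inl i)) = .inl (.inl i) := rfl
@[simp] lemma we_b {k m : ℕ} (a : Unit ⊕ Fin m) :
    we (k := k) (m := m) (.inl (.inr a)) = .inr a := rfl
@[simp] lemma we_c {k m : ℕ} (i : Fin k) :
    we (k := k) (m := m) (.inr i) = .inl (.inr i) := rfl

lemma cc_sq : cc ^ 2 = 1 / 2 := by rw [sq]; exact cc_mul_cc

noncomputable def Hmat {k : ℕ} (Gstar : SimpleGraph (Fin k)) (y : Fin k → Bool) :
    Matrix (Fin k) (Fin k) ℝ :=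
  Gstar.lapMatrix ℝ + Matrix.diagonal (fun i : Fin k => if y i then (1 : ℝ) else 0)

lemma lap_star (i j : Fin k) : Gstar.lapMatrix ℝ i j =
    (if i = j then (Gstar.degree i : ℝ) else 0) - (if Gstar.Adj i j then 1 else 0) := by
  rw [lap_apply]
  congr 1
  · by_cases h : i = j <;> simp [h, SimpleGraph.degree_eq_sum_if_adj]

lemma L11 (i j : Fin k) :
    (wGraph Gstar Gb y).lapMatrix ℝ (.inl (.inl i)) (.inl (.inl j)) = Hmat Gstar y i j := by
  rw [lap_apply, adjMatrix_wGraph, Hmat, Matrix.add_apply, lap_star]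
  by_cases h : i = j
  · subst h
    simp [sum_adjW_row1, adjW, SimpleGraph.degree, SimpleGraph.neighborFinset,
      SimpleGraph.neighborSet, Set.toFinset_setOf]
    congr 1; ext; simp only [Finset.mem_filter, Finset.mem_univ, true_and]; exact (Set.mem_toFinset (s := Gstar.neighborSet i)).symm
  · simp [h, adjW, Matrix.diagonal_apply_ne _ h]

lemma L22 (i j : Fin k) :
    (wGraph Gstar Gb y).lapMatrix ℝ (.inl (.inr i)) (.inl (.inr j)) = Hmat Gstar y i j := by
  rw [lap_apply, adjMatrix_wGraph, Hmat, Matrix.add_apply, lap_star]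
  by_cases h : i = j
  · subst h
    simp [sum_adjW_row2, adjW, SimpleGraph.degree, SimpleGraph.neighborFinset,
      SimpleGraph.neighborSet, Set.toFinset_setOf]
    congr 1; ext; simp only [Finset.mem_filter, Finset.mem_univ, true_and]; exact (Set.mem_toFinset (s := Gstar.neighborSet i)).symm
  · simp [h, adjW, Matrix.diagonal_apply_ne _ h]

lemma L12 (i j : Fin k) :
    (wGraph Gstar Gb y).lapMatrix ℝ (.inl (.inl i)) (.inl (.inr j)) = 0 := by
  rw [lap_apply, adjMatrix_wGraph]
  simp [adjW]

lemma L21 (i j : Fin k) :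
    (wGraph Gstar Gb y).lapMatrix ℝ (.inl (.inr i)) (.inl (.inl j)) = 0 := by
  rw [lap_apply, adjMatrix_wGraph]
  simp [adjW]

lemma Lc (a : Unit ⊕ Fin m) (j : Fin k) :
    (wGraph Gstar Gb y).lapMatrix ℝ (.inr a) (.inl (.inl j)) =
      (wGraph Gstar Gb y).lapMatrix ℝ (.inr a) (.inl (.inr j)) := by
  rw [lap_apply, lap_apply, adjMatrix_wGraph]
  rcases a with u|b <;> simp [adjW]

noncomputable def M1 {k m : ℕ} (Gstar : SimpleGraph (Fin k)) (Gb : SimpleGraph (Unit ⊕ Fin m))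
    (y : Fin k → Bool) : Matrix (Wt k m) (Wt k m) ℝ :=
  ((wGraph Gstar Gb y).lapMatrix ℝ).submatrix we we

lemma key1 : Pmᵀ * M1 Gstar Gb y * Pm =
    Matrix.fromBlocks ((Pmᵀ * M1 Gstar Gb y * Pm).toBlocks₁₁) 0 0 (Hmat Gstar y) := by
  have hsymL : ((wGraph Gstar Gb y).lapMatrix ℝ)ᵀ = (wGraph Gstar Gb y).lapMatrix ℝ :=
    (wGraph Gstar Gb y).isSymm_lapMatrix ℝ
  have hsymM : (M1 Gstar Gb y)ᵀ = M1 Gstar Gb y := by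
    rw [M1, Matrix.transpose_submatrix, hsymL]
  set Q := Pmᵀ * M1 Gstar Gb y * Pm with hQ
  have hsymQ : Qᵀ = Q := by
    rw [hQ, Matrix.transpose_mul, Matrix.transpose_mul, Matrix.transpose_transpose, hsymM,
      mul_assoc]
  have hoff : ∀ (w : Fin k ⊕ (Unit ⊕ Fin m)) (j : Fin k), Q (.inl w) (.inr j) = 0 := by
    intro w j
    rcases w with i|b
    · rw [hQ, triple_apply]
      simp only [sumP_row1, mulPm_col3, M1, Matrix.submatrix_apply, we_a, we_b, we_c]
      rw [L11, L22, L12, L21]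
      ring
    · rw [hQ, triple_apply]
      simp only [sumP_row2, mulPm_col3, M1, Matrix.submatrix_apply, we_a, we_b, we_c]
      rw [Lc]
      ring
  ext v w
  rcases v with w1|i <;> rcases w with w2|j
  · rfl
  · rw [Matrix.fromBlocks_apply₁₂]
    exact hoff w1 j
  · rw [Matrix.fromBlocks_apply₂₁]
    calc Q (.inr i) (.inl w2) = Qᵀ (.inl w2) (.inr i) := rfl
    _ = Q (.inl w2) (.inr i) := by rw [hsymQ]
    _ = (0 : Matrix _ _ ℝ) w2 i := by rw [hoff w2 i]; rfl
  · rw [Matrix.fromBlocks_apply₂₂, hQ, triple_apply]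
    simp only [sumP_row3, mulPm_col3, M1, Matrix.submatrix_apply, we_a, we_b, we_c]
    rw [L11, L22, L12, L21]
    linear_combination (2 * Hmat Gstar y i j) * cc_mul_cc

lemma Dm11 (i j : Fin k) : Dmat (m := m) z (.inl (.inl i)) (.inl (.inl j)) =
    if i = j then (if z i then 1 else 0) else 0 := by
  simp only [Dmat, sum_adjZ_row1]
  have : adjZ (m := m) z (.inl (.inl i)) (.inl (.inl j)) = 0 := rfl
  rw [this]
  split_ifs with h1 h2 <;> simp_all

lemma Dm22 (i j : Fin k) : Dmat (m := m) z (.inl (.inr i)) (.inl (.inr j)) =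
    if i = j then (if z i then 1 else 0) else 0 := by
  simp only [Dmat, sum_adjZ_row2]
  have : adjZ (m := m) z (.inl (.inr i)) (.inl (.inr j)) = 0 := rfl
  rw [this]
  split_ifs with h1 h2 <;> simp_all

lemma Dm12 (i j : Fin k) : Dmat (m := m) z (.inl (.inl i)) (.inl (.inr j)) =
    if i = j then (if z i then -1 else 0) else 0 := by
  have : Dmat (m := m) z (.inl (.inl i)) (.inl (.inr j)) =
      0 - (if i = j ∧ z i then 1 else 0) := rfl
  rw [this]
  split_ifs <;> simp_all

lemma Dm21 (i j : Fin k) : Dmat (m := m) z (.inl (.inr i)) (.inl (.inl j)) =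
    if i = j then (if z i then -1 else 0) else 0 := by
  have : Dmat (m := m) z (.inl (.inr i)) (.inl (.inl j)) =
      0 - (if i = j ∧ z i then 1 else 0) := rfl
  rw [this]
  split_ifs <;> simp_all

lemma Dmr (a : Unit ⊕ Fin m) (w : Vt k m) : Dmat z (.inr a) w = 0 := by
  have h0 : ∀ w', adjZ (k := k) (m := m) z (.inr a) w' = 0 := by
    intro w'; rcases w' with (j'|j')|b' <;> rfl
  simp only [Dmat, h0, sum_adjZ_rowr]
  split_ifs <;> simp

lemma Dmc (v : Vt k m) (b : Unit ⊕ Fin m) : Dmat z v (.inr b) = 0 := by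
  have h0 : adjZ (k := k) (m := m) z v (.inr b) = 0 := by
    rcases v with (j'|j')|b' <;> rfl
  rcases v with (j'|j')|b' <;>
    simp only [Dmat, h0, sum_adjZ_row1, sum_adjZ_row2, sum_adjZ_rowr] <;>
    split_ifs <;> simp_all

lemma key2 : Pmᵀ * ((Dmat z).submatrix we we : Matrix (Wt k m) (Wt k m) ℝ) * Pm =
    Matrix.fromBlocks 0 0 0
      ((2 : ℝ) • Matrix.diagonal (fun i : Fin k => if z i then (1 : ℝ) else 0)) := by
  ext v w
  rcases v with (i|b)|i <;> rcases w with (j|b')|j <;> rw [triple_apply] <;>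
    simp only [sumP_row1, sumP_row2, sumP_row3, mulPm_col1, mulPm_col2, mulPm_col3,
      Matrix.submatrix_apply, we_a, we_b, we_c, Dm11, Dm22, Dm12, Dm21, Dmr, Dmc,
      Matrix.fromBlocks_apply₁₁, Matrix.fromBlocks_apply₁₂,
      Matrix.fromBlocks_apply₂₁, Matrix.fromBlocks_apply₂₂, Matrix.zero_apply,
      Matrix.smul_apply, Matrix.diagonal_apply, smul_eq_mul] <;>
    (try split_ifs)
  all_goals
    first
      | ring1
      | linear_combination (4 : ℝ) * cc_mul_cc
      | linear_combination (2 : ℝ) * cc_mul_cc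
      | linear_combination cc_mul_cc
      | linear_combination (-4 : ℝ) * cc_mul_cc
      | linear_combination (-2 : ℝ) * cc_mul_cc
      | linear_combination (-1 : ℝ) * cc_mul_cc
      | (rw [cc_sq]; norm_num)
      | (rw [cc_mul_cc]; norm_num)
      | simp_all

/-- With `H = L(G*) + E_y`, the Laplacian spectrum of `𝓔_z(G)` equals
`(Lspect(G) \ spect(H)) ∪ spect(H + 2E_z)` as multisets; in particular `G` and `𝓔_z(G)`
share at least `n - k` Laplacian eigenvalues (here `n = 2k + 1 + m`). -/
theorem ezGraph_spectrum (k m : ℕ) (hk : 0 < k) (Gstar : SimpleGraph (Fin k))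
    (Gb : SimpleGraph (Unit ⊕ Fin m)) (y z : Fin k → Bool) :
    ((ezGraph Gstar Gb y z).lapMatrix ℝ).charpoly.roots =
      ((wGraph Gstar Gb y).lapMatrix ℝ).charpoly.roots
        - (Gstar.lapMatrix ℝ +
            Matrix.diagonal (fun i : Fin k => if y i then (1 : ℝ) else 0)).charpoly.roots
        + (Gstar.lapMatrix ℝ +
            Matrix.diagonal (fun i : Fin k => if y i then (1 : ℝ) else 0) +
            (2 : ℝ) • Matrix.diagonal
              (fun i : Fin k => if z i then (1 : ℝ) else 0)).charpoly.roots ∧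
    (2 * k + 1 + m) - k ≤
      Multiset.card (((wGraph Gstar Gb y).lapMatrix ℝ).charpoly.roots
        ∩ ((ezGraph Gstar Gb y z).lapMatrix ℝ).charpoly.roots) := by
  have hHdef : Gstar.lapMatrix ℝ +
      Matrix.diagonal (fun i : Fin k => if y i then (1 : ℝ) else 0) = Hmat Gstar y := rfl
  set A : Matrix (Fin k ⊕ (Unit ⊕ Fin m)) (Fin k ⊕ (Unit ⊕ Fin m)) ℝ :=
    (Pmᵀ * M1 Gstar Gb y * Pm).toBlocks₁₁ with hA
  -- charpoly of the base graph
  have h0 : ∀ N : Matrix (Vt k m) (Vt k m) ℝ, N.charpoly = (N.submatrix we we).charpoly := by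
    intro N
    rw [← Matrix.charpoly_reindex (we (k := k) (m := m)).symm N]
    rfl
  have hcp1 : ((wGraph Gstar Gb y).lapMatrix ℝ).charpoly =
      A.charpoly * (Hmat Gstar y).charpoly := by
    rw [h0, ← M1, ← my_charpoly_conj Pm (M1 Gstar Gb y) PtP, key1 Gstar Gb y, ← hA,
      Matrix.charpoly_fromBlocks_zero₂₁]
  have hM2 : Pmᵀ * (((ezGraph Gstar Gb y z).lapMatrix ℝ).submatrix we we) * Pm =
      Matrix.fromBlocks A 0 0 (Hmat Gstar y +
        (2 : ℝ) • Matrix.diagonal (fun i : Fin k => if z i then (1 : ℝ) else 0)) := by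
    rw [lap_ez_eq]
    have hsub : (((wGraph Gstar Gb y).lapMatrix ℝ + Dmat z)).submatrix (we (k := k) (m := m)) we =
        ((wGraph Gstar Gb y).lapMatrix ℝ).submatrix we we + (Dmat z).submatrix we we := rfl
    rw [hsub, Matrix.mul_add, Matrix.add_mul, ← M1, key1 Gstar Gb y, key2, ← hA,
      Matrix.fromBlocks_add]
    simp
  have hcp2 : ((ezGraph Gstar Gb y z).lapMatrix ℝ).charpoly =
      A.charpoly * (Hmat Gstar y +
        (2 : ℝ) • Matrix.diagonal (fun i : Fin k => if z i then (1 : ℝ) else 0)).charpoly := by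
    rw [h0, ← my_charpoly_conj Pm _ PtP, hM2, Matrix.charpoly_fromBlocks_zero₂₁]
  -- A is symmetric
  have hsymL : ((wGraph Gstar Gb y).lapMatrix ℝ)ᵀ = (wGraph Gstar Gb y).lapMatrix ℝ :=
    (wGraph Gstar Gb y).isSymm_lapMatrix ℝ
  have hsymM : (M1 Gstar Gb y)ᵀ = M1 Gstar Gb y := by
    rw [M1, Matrix.transpose_submatrix, hsymL]
  have hsymQ : (Pmᵀ * M1 Gstar Gb y * Pm)ᵀ = Pmᵀ * M1 Gstar Gb y * Pm := by
    rw [Matrix.transpose_mul, Matrix.transpose_mul, Matrix.transpose_transpose, hsymM, mul_assoc]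
  have hAH : A.IsHermitian := by
    rw [Matrix.IsHermitian, Matrix.conjTranspose_eq_transpose_of_trivial]
    ext i j
    exact congrFun (congrFun hsymQ (Sum.inl i)) (Sum.inl j)
  have hcard : Multiset.card A.charpoly.roots = k + (1 + m) := by
    rw [my_card_roots_hermitian hAH]
    simp
  have hne1 : A.charpoly * (Hmat Gstar y).charpoly ≠ 0 :=
    mul_ne_zero (Matrix.charpoly_monic _).ne_zero (Matrix.charpoly_monic _).ne_zero
  have hne2 : A.charpoly * (Hmat Gstar y +
      (2 : ℝ) • Matrix.diagonal (fun i : Fin k => if z i then (1 : ℝ) else 0)).charpoly ≠ 0 :=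
    mul_ne_zero (Matrix.charpoly_monic _).ne_zero (Matrix.charpoly_monic _).ne_zero
  have hr1 : ((wGraph Gstar Gb y).lapMatrix ℝ).charpoly.roots =
      A.charpoly.roots + (Hmat Gstar y).charpoly.roots := by
    rw [hcp1, Polynomial.roots_mul hne1]
  have hr2 : ((ezGraph Gstar Gb y z).lapMatrix ℝ).charpoly.roots =
      A.charpoly.roots + (Hmat Gstar y +
        (2 : ℝ) • Matrix.diagonal (fun i : Fin k => if z i then (1 : ℝ) else 0)).charpoly.roots := by
    rw [hcp2, Polynomial.roots_mul hne2]
  constructor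
  · rw [hHdef, hr1, hr2, add_tsub_cancel_right]
  · have hle1 : A.charpoly.roots ≤ ((wGraph Gstar Gb y).lapMatrix ℝ).charpoly.roots := by
      rw [hr1]; exact Multiset.le_add_right _ _
    have hle2 : A.charpoly.roots ≤ ((ezGraph Gstar Gb y z).lapMatrix ℝ).charpoly.roots := by
      rw [hr2]; exact Multiset.le_add_right _ _
    have hcle := Multiset.card_le_card (Multiset.le_inter hle1 hle2)
    rw [hcard] at hcle
    omega
end
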